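/- arXiv:1807.06000 — 3 statements merged into one kernel-verified Lean document; each statement's English description precedes it below -/
import Mathlib

section
/- If D is a decomposition space, then its edgewise subdivision sd(D) is a Segal simplicial set, i.e. for every n ≥ 2 the canonical map (sd D)_n → (sd D)_1 ×_{(sd D)_0} ⋯ ×_{(sd D)_0} (sd D)_1 induced by the n chain inclusions [1] → [n] is a bijection; equivalently, sd(D) is isomorphic to the nerve of a category. -/
open CategoryTheory CategoryTheory.Limits Opposite Simplicial

namespace DecompPaper

def IsActive {a b : SimplexCategory} (f : a ⟶ b) : Prop :=
  f.toOrderHom 0 = 0 ∧ f.toOrderHom (Fin.last a.len) = Fin.last b.len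

def IsInert {a b : SimplexCategory} (f : a ⟶ b) : Prop :=
  ∀ i : Fin a.len, (f.toOrderHom i.succ : ℕ) = (f.toOrderHom i.castSucc : ℕ) + 1

def IsTopPres {a b : SimplexCategory} (f : a ⟶ b) : Prop :=
  f.toOrderHom (Fin.last a.len) = Fin.last b.len

def IsDecomp (X : SSet.{0}) : Prop :=
  ∀ ⦃a b c d : SimplexCategory⦄ (f : a ⟶ b) (g : a ⟶ c) (h : b ⟶ d) (k : c ⟶ d),
    IsActive f → IsInert g → IsPushout f g h k →
      IsPullback (X.map h.op) (X.map k.op) (X.map f.op) (X.map g.op)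

def IsCULF {Y X : SSet.{0}} (F : Y ⟶ X) : Prop :=
  ∀ ⦃a b : SimplexCategory⦄ (g : a ⟶ b), IsActive g →
    IsPullback (Y.map g.op) (F.app (op b)) (F.app (op a)) (X.map g.op)

def IsRightFib {Y X : SSet.{0}} (F : Y ⟶ X) : Prop :=
  ∀ n : ℕ,
    IsPullback (Y.map (SimplexCategory.δ (0 : Fin (n + 2))).op)
      (F.app (op (SimplexCategory.mk (n + 1)))) (F.app (op (SimplexCategory.mk n)))
      (X.map (SimplexCategory.δ (0 : Fin (n + 2))).op)

/-! ### The edgewise subdivision functor `Q` -/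

def natApp {m n : ℕ} (f : Fin (m + 1) →o Fin (n + 1)) (t : ℕ) : ℕ :=
  (f ⟨min t m, Nat.lt_succ_of_le (min_le_right t m)⟩ : ℕ)

lemma natApp_le {m n : ℕ} (f : Fin (m + 1) →o Fin (n + 1)) (t : ℕ) : natApp f t ≤ n :=
  Nat.lt_succ_iff.mp (f _).isLt

lemma natApp_mono {m n : ℕ} (f : Fin (m + 1) →o Fin (n + 1)) {s t : ℕ} (h : s ≤ t) :
    natApp f s ≤ natApp f t :=
  f.monotone (by simp only [Fin.mk_le_mk]; omega)

lemma natApp_of_le {m n : ℕ} (f : Fin (m + 1) →o Fin (n + 1)) {t : ℕ} (h : t ≤ m) :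
    natApp f t = (f ⟨t, by omega⟩ : ℕ) := by
  have harg : (⟨min t m, Nat.lt_succ_of_le (min_le_right t m)⟩ : Fin (m + 1)) = ⟨t, by omega⟩ :=
    Fin.ext (Nat.min_eq_left h)
  unfold natApp
  rw [harg]

lemma natApp_comp {l m n : ℕ} (f : Fin (l + 1) →o Fin (m + 1)) (g : Fin (m + 1) →o Fin (n + 1))
    (t : ℕ) : natApp (g.comp f) t = natApp g (natApp f t) := by
  have h : natApp f t ≤ m := natApp_le f t
  rw [natApp_of_le g h]
  unfold natApp
  rfl

def Qfun {m n : ℕ} (f : Fin (m + 1) →o Fin (n + 1)) : Fin (2 * m + 2) → Fin (2 * n + 2) :=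
  fun i =>
    if (i : ℕ) ≤ m then ⟨n - natApp f (m - (i : ℕ)), by omega⟩
    else ⟨n + 1 + natApp f ((i : ℕ) - (m + 1)), by have := natApp_le f ((i : ℕ) - (m + 1)); omega⟩

lemma Qfun_val_le {m n : ℕ} (f : Fin (m + 1) →o Fin (n + 1)) (i : Fin (2 * m + 2))
    (h : (i : ℕ) ≤ m) : (Qfun f i : ℕ) = n - natApp f (m - (i : ℕ)) := by
  unfold Qfun; rw [if_pos h]

lemma Qfun_val_gt {m n : ℕ} (f : Fin (m + 1) →o Fin (n + 1)) (i : Fin (2 * m + 2))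
    (h : ¬ (i : ℕ) ≤ m) : (Qfun f i : ℕ) = n + 1 + natApp f ((i : ℕ) - (m + 1)) := by
  unfold Qfun; rw [if_neg h]

lemma Qfun_monotone {m n : ℕ} (f : Fin (m + 1) →o Fin (n + 1)) : Monotone (Qfun f) := by
  intro i j hij
  have hij' : (i : ℕ) ≤ (j : ℕ) := hij
  rw [Fin.le_def]
  by_cases hi : (i : ℕ) ≤ m <;> by_cases hj : (j : ℕ) ≤ m
  · rw [Qfun_val_le f i hi, Qfun_val_le f j hj]
    have h1 := natApp_mono f (show m - (j : ℕ) ≤ m - (i : ℕ) by omega)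
    have h2 := natApp_le f (m - (i : ℕ))
    omega
  · rw [Qfun_val_le f i hi, Qfun_val_gt f j hj]
    omega
  · omega
  · rw [Qfun_val_gt f i hi, Qfun_val_gt f j hj]
    have h1 := natApp_mono f (show (i : ℕ) - (m + 1) ≤ (j : ℕ) - (m + 1) by omega)
    omega

def Q : SimplexCategory ⥤ SimplexCategory where
  obj a := SimplexCategory.mk (2 * a.len + 1)
  map {a b} f := SimplexCategory.Hom.mk ⟨Qfun f.toOrderHom, Qfun_monotone f.toOrderHom⟩
  map_id a := by
    apply SimplexCategory.Hom.ext
    apply OrderHom.ext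
    funext i
    apply Fin.ext
    show (Qfun (SimplexCategory.Hom.toOrderHom (𝟙 a)) i : ℕ) = (i : ℕ)
    have hi : (i : ℕ) < 2 * a.len + 2 := i.isLt
    have hid : ∀ t : ℕ, natApp (SimplexCategory.Hom.toOrderHom (𝟙 a)) t = min t a.len :=
      fun t => rfl
    by_cases h : (i : ℕ) ≤ a.len
    · rw [Qfun_val_le _ i h, hid]; omega
    · rw [Qfun_val_gt _ i h, hid]; omega
  map_comp {a b c} f g := by
    apply SimplexCategory.Hom.ext
    apply OrderHom.ext
    funext i
    apply Fin.ext
    show (Qfun (SimplexCategory.Hom.toOrderHom (f ≫ g)) i : ℕ)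
        = (Qfun g.toOrderHom (Qfun f.toOrderHom i) : ℕ)
    have hi : (i : ℕ) < 2 * a.len + 2 := i.isLt
    have h2 : SimplexCategory.Hom.toOrderHom (f ≫ g)
        = g.toOrderHom.comp f.toOrderHom := rfl
    rw [h2]
    by_cases h : (i : ℕ) ≤ a.len
    · have hA := natApp_le f.toOrderHom (a.len - (i : ℕ))
      have hfi : ((Qfun f.toOrderHom i : Fin (2 * b.len + 2)) : ℕ) ≤ b.len := by
        rw [Qfun_val_le _ i h]; omega
      rw [Qfun_val_le _ i h, Qfun_val_le _ _ hfi, Qfun_val_le _ i h, natApp_comp]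
      rw [show b.len - (b.len - natApp f.toOrderHom (a.len - (i : ℕ)))
          = natApp f.toOrderHom (a.len - (i : ℕ)) by omega]
    · have hA := natApp_le f.toOrderHom ((i : ℕ) - (a.len + 1))
      have hfi : ¬ ((Qfun f.toOrderHom i : Fin (2 * b.len + 2)) : ℕ) ≤ b.len := by
        rw [Qfun_val_gt _ i h]; omega
      rw [Qfun_val_gt _ i h, Qfun_val_gt _ _ hfi, Qfun_val_gt _ i h, natApp_comp]
      rw [show b.len + 1 + natApp f.toOrderHom ((i : ℕ) - (a.len + 1)) - (b.len + 1)
          = natApp f.toOrderHom ((i : ℕ) - (a.len + 1)) by omega]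

/-- Edgewise subdivision of simplicial sets: precomposition with `Qᵒᵖ`. -/
def sdF : SSet.{0} ⥤ SSet.{0} :=
  (Functor.whiskeringLeft SimplexCategoryᵒᵖ SimplexCategoryᵒᵖ (Type 0)).obj Q.op

/-- The unique active map `[1] ⟶ [m]`. -/
def act1 (m : ℕ) : SimplexCategory.mk 1 ⟶ SimplexCategory.mk m :=
  SimplexCategory.Hom.mk
    ⟨fun i => if (i : ℕ) = 0 then ⟨0, by omega⟩ else Fin.last m, by
      intro i j hij
      by_cases h : (i : ℕ) = 0
      · by_cases h' : (j : ℕ) = 0 <;> simp [h, h', Fin.le_def]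
      · have : (j : ℕ) ≠ 0 := by have := Fin.le_def.mp hij; omega
        simp [h, this]⟩

/-- The vertex `t` as a map `[0] ⟶ [n]`. -/
def vert (n : ℕ) (t : Fin (n + 1)) : SimplexCategory.mk 0 ⟶ SimplexCategory.mk n :=
  SimplexCategory.Hom.mk (OrderHom.const _ t)

/-- The `i`-th edge inclusion `[1] ⟶ [n]`. -/
def edgeIncl (n : ℕ) (i : Fin n) : SimplexCategory.mk 1 ⟶ SimplexCategory.mk n :=
  SimplexCategory.Hom.mk
    ⟨fun j => ⟨(i : ℕ) + (j : ℕ), by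
        have h1 := i.isLt
        have h2 := j.isLt
        simp only [SimplexCategory.len_mk] at h2 ⊢
        omega⟩, by
      intro x y h
      have := Fin.le_def.mp h
      simp only [Fin.mk_le_mk]
      omega⟩

/-- The set of chains of `k` composable edges in a simplicial set. -/
def SegalChains (X : SSet.{0}) (k : ℕ) : Type :=
  {p : Fin k → X.obj (op (SimplexCategory.mk 1)) //
    ∀ i j : Fin k, (j : ℕ) = (i : ℕ) + 1 →
      X.map (vert 1 1).op (p i) = X.map (vert 1 0).op (p j)}

/-- The spine (Segal) map from `k`-simplices to chains of `k` edges. -/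
def spine (X : SSet.{0}) (k : ℕ) (σ : X.obj (op (SimplexCategory.mk k))) : SegalChains X k :=
  ⟨fun i => X.map (edgeIncl k i).op σ, by
    intro i j hij
    have h1 : vert 1 1 ≫ edgeIncl k i = vert 1 0 ≫ edgeIncl k j := by
      apply SimplexCategory.Hom.ext
      apply OrderHom.ext
      funext z
      apply Fin.ext
      show ((edgeIncl k i).toOrderHom ((vert 1 1).toOrderHom z) : ℕ)
          = ((edgeIncl k j).toOrderHom ((vert 1 0).toOrderHom z) : ℕ)
      show ((i : ℕ) + ((1 : Fin 2) : ℕ)) = ((j : ℕ) + ((0 : Fin 2) : ℕ))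
      simp
      omega
    calc X.map (vert 1 1).op (X.map (edgeIncl k i).op σ)
        = X.map ((vert 1 1 ≫ edgeIncl k i).op) σ := by
          rw [op_comp, FunctorToTypes.map_comp_apply]
      _ = X.map ((vert 1 0 ≫ edgeIncl k j).op) σ := by rw [h1]
      _ = X.map (vert 1 0).op (X.map (edgeIncl k j).op σ) := by
          rw [op_comp, FunctorToTypes.map_comp_apply]⟩


/-! ### The category of decomposition spaces and CULF maps -/

lemma IsCULF.id (X : SSet.{0}) : IsCULF (𝟙 X) := by
  intro a b g hg
  have : (𝟙 X : X ⟶ X).app (op b) = 𝟙 (X.obj (op b)) := rfl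
  refine IsPullback.of_vert_isIso ⟨by simp⟩

lemma IsCULF.comp {X Y Z : SSet.{0}} {f : X ⟶ Y} {g : Y ⟶ Z} (hf : IsCULF f) (hg : IsCULF g) :
    IsCULF (f ≫ g) := by
  intro a b s hs
  simpa using (hf s hs).paste_vert (hg s hs)

/-- The category of decomposition spaces and CULF maps. -/
structure DecompCat : Type 1 where
  X : SSet.{0}
  decomp : IsDecomp X

instance : Category.{0} DecompCat where
  Hom A B := {f : A.X ⟶ B.X // IsCULF f}
  id A := ⟨𝟙 A.X, IsCULF.id A.X⟩
  comp f g := ⟨f.1 ≫ g.1, f.2.comp g.2⟩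
  id_comp f := Subtype.ext (Category.id_comp f.1)
  comp_id f := Subtype.ext (Category.comp_id f.1)
  assoc f g h := Subtype.ext (Category.assoc f.1 g.1 h.1)

/-! ### Discrete fibrations -/

/-- A functor is a discrete fibration if every morphism into the image of an object
has a unique lift with that object as codomain. -/
def IsDiscreteFibration {E C : Type*} [Category E] [Category C] (p : E ⥤ C) : Prop :=
  ∀ (y : E) (c : C) (f : c ⟶ p.obj y),
    ∃! g : Σ x : E, x ⟶ y, ∃ h : p.obj g.1 = c, p.map g.2 = eqToHom h ≫ f

/-- The category of discrete fibrations over `T`, with morphisms the functors over `T`. -/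
structure DFibOver (T : Type) [SmallCategory T] : Type 1 where
  E : Type
  [cat : SmallCategory E]
  p : E ⥤ T
  fib : IsDiscreteFibration p

attribute [instance] DFibOver.cat

instance {T : Type} [SmallCategory T] : Category.{0} (DFibOver T) where
  Hom A B := {G : A.E ⥤ B.E // G ⋙ B.p = A.p}
  id A := ⟨𝟭 A.E, Functor.id_comp A.p⟩
  comp f g := ⟨f.1 ⋙ g.1, by rw [Functor.assoc, g.2, f.2]⟩
  id_comp f := Subtype.ext (Functor.id_comp f.1)
  comp_id f := Subtype.ext (Functor.comp_id f.1)
  assoc f g h := Subtype.ext (Functor.assoc f.1 g.1 h.1)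

/-! ### The category of elements of a simplicial set -/

/-- The category of elements of a simplicial set `X`: objects are simplices of `X`;
a morphism `(m, τ) ⟶ (n, σ)` is a map `f : [m] ⟶ [n]` of `Δ` with `X(f)(σ) = τ`. -/
structure El (X : SSet.{0}) : Type where
  n : ℕ
  σ : X.obj (op (SimplexCategory.mk n))

instance (X : SSet.{0}) : SmallCategory (El X) where
  Hom a b := {f : SimplexCategory.mk a.n ⟶ SimplexCategory.mk b.n // X.map f.op b.σ = a.σ}
  id a := ⟨𝟙 _, by simp⟩
  comp {a b c} f g := ⟨f.1 ≫ g.1, by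
    rw [op_comp, FunctorToTypes.map_comp_apply, g.2, f.2]⟩
  id_comp f := Subtype.ext (Category.id_comp f.1)
  comp_id f := Subtype.ext (Category.comp_id f.1)
  assoc f g h := Subtype.ext (Category.assoc f.1 g.1 h.1)

/-- Functoriality of the category of elements in the simplicial set. -/
def elMap {X Y : SSet.{0}} (f : X ⟶ Y) : El X ⥤ El Y where
  obj e := ⟨e.n, f.app _ e.σ⟩
  map {a b} g := ⟨g.1, by
    have h := NatTrans.naturality_apply f g.1.op b.σ
    dsimp only
    rw [← h, g.2]⟩
  map_id a := Subtype.ext rfl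
  map_comp f g := Subtype.ext rfl

/-- The functor `ω_X : el(sd X) ⥤ el(X)` lying over `Q`. -/
def elSd (X : SSet.{0}) : El (sdF.obj X) ⥤ El X where
  obj e := ⟨2 * e.n + 1, e.σ⟩
  map {a b} g := ⟨Q.map g.1, g.2⟩
  map_id a := Subtype.ext (Q.map_id _)
  map_comp f g := Subtype.ext (Q.map_comp f.1 g.1)

/-- The objects (dimensions) of the chain in `Δ` underlying a `k`-simplex of the nerve of
the category of elements. -/
def chainObj {X : SSet.{0}} {k : ℕ} (F : ComposableArrows (El X) k) : Fin (k + 1) → ℕ :=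
  fun i => (F.obj i).n

/-- The consecutive maps in `Δ` underlying a `k`-simplex of the nerve of the category of
elements. -/
def chainMap {X : SSet.{0}} {k : ℕ} (F : ComposableArrows (El X) k) :
    ∀ i : Fin k, SimplexCategory.mk (chainObj F i.castSucc) ⟶
      SimplexCategory.mk (chainObj F i.succ) :=
  fun i => (F.map (homOfLE (Fin.castSucc_lt_succ (i := i)).le)).1

/-! ### Ladders -/

/-- `IsLadderA n f α` says that `α` is a commutative ladder from the chain of maps
`Q(d⊤) : Q[i] ⟶ Q[i+1]` to the chain `f` with all vertical maps `α i : Q[i] ⟶ [n i]`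
active. -/
def IsLadderA {k : ℕ} (n : Fin (k + 1) → ℕ)
    (f : ∀ i : Fin k, SimplexCategory.mk (n i.castSucc) ⟶ SimplexCategory.mk (n i.succ))
    (α : ∀ i : Fin (k + 1), Q.obj (SimplexCategory.mk (i : ℕ)) ⟶ SimplexCategory.mk (n i)) :
    Prop :=
  (∀ i, IsActive (α i)) ∧
    ∀ i : Fin k, Q.map (SimplexCategory.δ (Fin.last ((i : ℕ) + 1))) ≫ α i.succ
      = α i.castSucc ≫ f i

/-- `IsLadderB n f β` says that `β` is a commutative ladder from the chain of top coface maps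
`d⊤ : [i] ⟶ [i+1]` to the chain `f` with all vertical maps `β i : [i] ⟶ [n i]`
top-preserving. -/
def IsLadderB {k : ℕ} (n : Fin (k + 1) → ℕ)
    (f : ∀ i : Fin k, SimplexCategory.mk (n i.castSucc) ⟶ SimplexCategory.mk (n i.succ))
    (β : ∀ i : Fin (k + 1), SimplexCategory.mk (i : ℕ) ⟶ SimplexCategory.mk (n i)) : Prop :=
  (∀ i, IsTopPres (β i)) ∧
    ∀ i : Fin k, SimplexCategory.δ (Fin.last ((i : ℕ) + 1)) ≫ β i.succ = β i.castSucc ≫ f i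

/-- `IsLambda Λ` says that the family of simplicial maps `Λ X : N(el X) ⟶ sd X` is,
in each degree, given by sending a `k`-simplex `([n₀] → ⋯ → [n_k], σ)` to `X(α_k)(σ)`,
where `α_k : Q[k] ⟶ [n_k]` is the last vertical map of the (unique) active ladder over the
underlying chain in `Δ`. -/
def IsLambda (Λ : ∀ X : SSet.{0}, nerve (El X) ⟶ sdF.obj X) : Prop :=
  ∀ (X : SSet.{0}) (k : ℕ) (F : ComposableArrows (El X) k),
    ∃ α, IsLadderA (chainObj F) (chainMap F) α ∧
      (Λ X).app (op (SimplexCategory.mk k)) F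
        = X.map (α (Fin.last k)).op (F.obj (Fin.last k)).σ

/-! ### The last-segment inclusion and `cod` -/

/-- The last-segment inclusion `[n] ⟶ Q[n] = [2n+1]`. -/
def Lhom (a : SimplexCategory) : a ⟶ Q.obj a :=
  SimplexCategory.Hom.mk
    ⟨fun i => ⟨a.len + 1 + (i : ℕ), by
        have h : (i : ℕ) < a.len + 1 := i.isLt
        exact show a.len + 1 + (i : ℕ) < 2 * a.len + 1 + 1 by omega⟩,
      by intro i j hle; show a.len + 1 + (i : ℕ) ≤ a.len + 1 + (j : ℕ); have := Fin.le_def.mp hle; omega⟩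

/-- The natural transformation `id ⇒ Q` given by the last-segment inclusions
`[n] ⟶ [2n+1]`. -/
def Lnat : 𝟭 SimplexCategory ⟶ Q where
  app := Lhom
  naturality a b f := by
    apply SimplexCategory.Hom.ext
    apply OrderHom.ext
    funext i
    apply Fin.ext
    have hi : (i : ℕ) < a.len + 1 := i.isLt
    have h1 : (SimplexCategory.Hom.toOrderHom ((𝟭 SimplexCategory).map f ≫ Lhom b) i : ℕ)
        = b.len + 1 + (f.toOrderHom i : ℕ) := rfl
    have h4 : ((Lhom a).toOrderHom i : ℕ) = a.len + 1 + (i : ℕ) := rfl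
    have key : (SimplexCategory.Hom.toOrderHom (Lhom a ≫ Q.map f) i : ℕ)
        = b.len + 1 + (f.toOrderHom i : ℕ) := by
      have h3 : ¬ ((Lhom a).toOrderHom i : ℕ) ≤ a.len := by omega
      have h5 : (SimplexCategory.Hom.toOrderHom (Lhom a ≫ Q.map f) i : ℕ)
          = (Qfun f.toOrderHom ((Lhom a).toOrderHom i) : ℕ) := rfl
      rw [h5, Qfun_val_gt f.toOrderHom _ h3, h4,
        show a.len + 1 + (i : ℕ) - (a.len + 1) = (i : ℕ) by omega,
        natApp_of_le f.toOrderHom (show (i : ℕ) ≤ a.len by omega)]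
      exact congrArg (fun z : Fin (a.len + 1) => b.len + 1 + (f.toOrderHom z : ℕ))
        (Fin.ext rfl)
    exact h1.trans key.symm

/-- The map `cod_X : sd(X) ⟶ X` induced by the last-segment inclusions. -/
def codN (X : SSet.{0}) : sdF.obj X ⟶ X := Functor.whiskerRight (NatTrans.op Lnat) X

/-! ### Strict pullbacks of categories -/

/-- The strict pullback of a functor `p` along a functor `G`. -/
structure StrictPB {A B C : Type} [SmallCategory A] [SmallCategory B] [SmallCategory C]
    (G : A ⥤ C) (p : B ⥤ C) : Type where
  pt : A
  fib : B
  eq : p.obj fib = G.obj pt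

instance {A B C : Type} [SmallCategory A] [SmallCategory B] [SmallCategory C]
    (G : A ⥤ C) (p : B ⥤ C) : SmallCategory (StrictPB G p) where
  Hom x y := {fg : (x.pt ⟶ y.pt) × (x.fib ⟶ y.fib) //
    p.map fg.2 = eqToHom x.eq ≫ G.map fg.1 ≫ eqToHom y.eq.symm}
  id x := ⟨(𝟙 x.pt, 𝟙 x.fib), by simp⟩
  comp {x y z} f g := ⟨(f.1.1 ≫ g.1.1, f.1.2 ≫ g.1.2), by
    rw [p.map_comp, f.2, g.2, G.map_comp]
    simp⟩
  id_comp f := Subtype.ext (Prod.ext (Category.id_comp f.1.1) (Category.id_comp f.1.2))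
  comp_id f := Subtype.ext (Prod.ext (Category.comp_id f.1.1) (Category.comp_id f.1.2))
  assoc f g h := Subtype.ext (Prod.ext (Category.assoc _ _ _) (Category.assoc _ _ _))

/-- Projection of the strict pullback to the base. -/
def pbProj {A B C : Type} [SmallCategory A] [SmallCategory B] [SmallCategory C]
    (G : A ⥤ C) (p : B ⥤ C) : StrictPB G p ⥤ A where
  obj x := x.pt
  map f := f.1.1
  map_id x := rfl
  map_comp f g := rfl

/-! ### Auxiliary simplex-category toolkit -/

open SimplexCategory

lemma homEq {a b : SimplexCategory} {f g : a ⟶ b}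
    (h : ∀ i, (f.toOrderHom i : ℕ) = (g.toOrderHom i : ℕ)) : f = g := by
  apply SimplexCategory.Hom.ext
  apply OrderHom.ext
  funext i
  exact Fin.ext (h i)

lemma comp_val {a b c : SimplexCategory} (f : a ⟶ b) (g : b ⟶ c) (i) :
    (f ≫ g).toOrderHom i = g.toOrderHom (f.toOrderHom i) := rfl

lemma map_map_apply {X : SSet.{0}} {a b c : SimplexCategory} (f : a ⟶ b) (g : b ⟶ c)
    (x : X.obj (op c)) : X.map f.op (X.map g.op x) = X.map (f ≫ g).op x := by
  rw [op_comp, FunctorToTypes.map_comp_apply]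

/-- The inclusion `[n] → [n+1]` of the first `n+1` elements (the last coface). -/
def dlast (n : ℕ) : SimplexCategory.mk n ⟶ SimplexCategory.mk (n + 1) :=
  SimplexCategory.Hom.mk ⟨fun j => j.castSucc, fun a b h => by
    rw [Fin.le_def] at h ⊢
    simpa using h⟩

/-- The edge `{i,j}` of `[n]` as a map `[1] ⟶ [n]`. -/
def mEdge (n : ℕ) (i j : Fin (n + 1)) (hij : i ≤ j) :
    SimplexCategory.mk 1 ⟶ SimplexCategory.mk n :=
  SimplexCategory.Hom.mk ⟨fun t => if (t : ℕ) = 0 then i else j, by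
    intro s t hst
    dsimp only
    by_cases hs : (s : ℕ) = 0
    · by_cases ht : (t : ℕ) = 0 <;> simp [hs, ht, hij]
    · have : (t : ℕ) ≠ 0 := by have := Fin.le_def.mp hst; omega
      simp [hs, this]⟩

/-- The triangle `{i,j,k}` of `[n]` as a map `[2] ⟶ [n]`. -/
def mTri (n : ℕ) (i j k : Fin (n + 1)) (hij : i ≤ j) (hjk : j ≤ k) :
    SimplexCategory.mk 2 ⟶ SimplexCategory.mk n :=
  SimplexCategory.Hom.mk ⟨fun t => if (t : ℕ) = 0 then i else if (t : ℕ) = 1 then j else k, by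
    intro s t hst
    have hst' := Fin.le_def.mp hst
    dsimp only
    by_cases hs : (s : ℕ) = 0
    · by_cases ht : (t : ℕ) = 0
      · simp [hs, ht]
      · by_cases ht1 : (t : ℕ) = 1 <;> simp [hs, ht, ht1, hij, hij.trans hjk]
    · by_cases hs1 : (s : ℕ) = 1
      · have ht : (t : ℕ) ≠ 0 := by omega
        by_cases ht1 : (t : ℕ) = 1 <;> simp [hs, hs1, ht, ht1, hjk]
      · have ht : (t : ℕ) ≠ 0 := by omega
        have ht1 : (t : ℕ) ≠ 1 := by omega
        simp [hs, hs1, ht, ht1]⟩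

/-- The unique map `[1] ⟶ [0]`. -/
def collapse : SimplexCategory.mk 1 ⟶ SimplexCategory.mk 0 :=
  SimplexCategory.Hom.mk ⟨fun _ => 0, fun _ _ _ => le_refl _⟩

section vals
variable {n : ℕ}

lemma vert_val (t : Fin (n + 1)) (x) : ((vert n t).toOrderHom x : ℕ) = (t : ℕ) := rfl

lemma edgeIncl_val (i : Fin n) (x) :
    ((edgeIncl n i).toOrderHom x : ℕ) = (i : ℕ) + (x : ℕ) := rfl

lemma dlast_val (x) : ((dlast n).toOrderHom x : ℕ) = (x : ℕ) := rfl

lemma mEdge_val (i j : Fin (n + 1)) (hij : i ≤ j) (x) :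
    ((mEdge n i j hij).toOrderHom x : ℕ) = if (x : ℕ) = 0 then (i : ℕ) else (j : ℕ) := by
  show ((if (x : ℕ) = 0 then i else j : Fin (n+1)) : ℕ) = _
  exact apply_ite _ _ _ _

lemma mTri_val (i j k : Fin (n + 1)) (hij : i ≤ j) (hjk : j ≤ k) (x) :
    ((mTri n i j k hij hjk).toOrderHom x : ℕ)
      = if (x : ℕ) = 0 then (i : ℕ) else if (x : ℕ) = 1 then (j : ℕ) else (k : ℕ) := by
  show ((if (x : ℕ) = 0 then i else if (x : ℕ) = 1 then j else k : Fin (n+1)) : ℕ) = _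
  rw [apply_ite (Fin.val), apply_ite (Fin.val)]

lemma collapse_val (x) : ((collapse).toOrderHom x : ℕ) = 0 := rfl

lemma act1_val (m : ℕ) (x) :
    ((act1 m).toOrderHom x : ℕ) = if (x : ℕ) = 0 then 0 else m := by
  show ((if (x : ℕ) = 0 then _ else Fin.last m : Fin (m+1)) : ℕ) = _
  rw [apply_ite (Fin.val)]
  rfl

lemma id_val {a : SimplexCategory} (x) : ((𝟙 a : a ⟶ a).toOrderHom x : ℕ) = (x : ℕ) := rfl
end vals

section comps
variable {m n : ℕ}

lemma vert_comp (t : Fin (m + 1)) (φ : SimplexCategory.mk m ⟶ SimplexCategory.mk n) :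
    vert m t ≫ φ = vert n (φ.toOrderHom t) :=
  homEq fun i => rfl

lemma mEdge_comp (i j : Fin (m + 1)) (hij : i ≤ j)
    (φ : SimplexCategory.mk m ⟶ SimplexCategory.mk n) :
    mEdge m i j hij ≫ φ = mEdge n (φ.toOrderHom i) (φ.toOrderHom j)
      (φ.toOrderHom.monotone hij) := by
  refine homEq fun x => ?_
  rw [comp_val, mEdge_val _ _ _ x]
  have harg : ((mEdge m i j hij).toOrderHom x) = if (x : ℕ) = 0 then i else j := rfl
  rw [harg]
  by_cases hx : (x : ℕ) = 0 <;> simp [hx]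

lemma edgeIncl_eq_mEdge (i : Fin n) :
    edgeIncl n i = mEdge n i.castSucc i.succ (Fin.castSucc_lt_succ (i := i)).le := by
  refine homEq fun x => ?_
  rw [edgeIncl_val, mEdge_val]
  have hx2 : (x : ℕ) < 2 := x.isLt
  by_cases hx : (x : ℕ) = 0
  · rw [if_pos hx]; simp [hx]
  · rw [if_neg hx]; simp; omega

lemma vert0_comp_mEdge (i j : Fin (n + 1)) (hij : i ≤ j) :
    vert 1 0 ≫ mEdge n i j hij = vert n i :=
  homEq fun x => by
    rw [comp_val, mEdge_val, vert_val, vert_val]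
    norm_num

lemma vert1_comp_mEdge (i j : Fin (n + 1)) (hij : i ≤ j) :
    vert 1 1 ≫ mEdge n i j hij = vert n j :=
  homEq fun x => by
    rw [comp_val, mEdge_val, vert_val, vert_val]
    norm_num

lemma mEdge_self (i : Fin (n + 1)) (h : i ≤ i) :
    mEdge n i i h = collapse ≫ vert n i :=
  homEq fun x => by
    rw [mEdge_val, comp_val, vert_val]
    by_cases hx : (x : ℕ) = 0 <;> simp [hx]

lemma mEdge_id : mEdge 1 0 1 (by decide) = 𝟙 (SimplexCategory.mk 1) :=
  homEq fun x => by
    rw [mEdge_val, id_val]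
    have hx2 : (x : ℕ) < 2 := x.isLt
    by_cases h : (x : ℕ) = 0 <;> simp [h] <;> omega

lemma edgeIncl_one : edgeIncl 1 0 = 𝟙 (SimplexCategory.mk 1) :=
  homEq fun x => by rw [edgeIncl_val, id_val]; simp

lemma vert_comp_collapse (t : Fin 2) : vert 1 t ≫ collapse = 𝟙 (SimplexCategory.mk 0) :=
  homEq fun x => by
    rw [comp_val, collapse_val, id_val]
    have hx : (x : ℕ) < 0 + 1 := x.isLt
    omega

lemma edgeIncl_comp_dlast (i : Fin n) :
    edgeIncl n i ≫ dlast n = edgeIncl (n + 1) i.castSucc :=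
  homEq fun x => by
    rw [comp_val, dlast_val, edgeIncl_val, edgeIncl_val]
    simp

lemma vertn_eq (hn : 1 ≤ n) :
    vert n (Fin.last n) = vert 1 1 ≫ edgeIncl n ⟨n - 1, by omega⟩ :=
  homEq fun x => by
    rw [vert_val, comp_val, edgeIncl_val, vert_val]
    show (Fin.last n : ℕ) = n - 1 + ((1 : Fin 2) : ℕ)
    rw [Fin.val_last]
    show n = n - 1 + 1
    omega
end comps
/-! ### Values of `Q.map` -/

section Qvals
variable {m n : ℕ}

lemma Qmap_toOrderHom (φ : SimplexCategory.mk m ⟶ SimplexCategory.mk n) (x) :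
    (Q.map φ).toOrderHom x = Qfun φ.toOrderHom x := rfl

lemma Qmap_val_le (φ : SimplexCategory.mk m ⟶ SimplexCategory.mk n)
    (x : Fin (2 * m + 2)) (h : (x : ℕ) ≤ m) :
    ((Q.map φ).toOrderHom x : ℕ)
      = n - (φ.toOrderHom ⟨m - (x : ℕ), by simp only [SimplexCategory.len_mk]; omega⟩ : ℕ) := by
  have h0 := Qfun_val_le φ.toOrderHom x h
  simp only [SimplexCategory.len_mk] at h0
  rw [natApp_of_le _ (show m - (x : ℕ) ≤ m by omega)] at h0
  exact h0

lemma Qmap_val_gt (φ : SimplexCategory.mk m ⟶ SimplexCategory.mk n)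
    (x : Fin (2 * m + 2)) (h : ¬ (x : ℕ) ≤ m) :
    ((Q.map φ).toOrderHom x : ℕ)
      = n + 1 + (φ.toOrderHom ⟨(x : ℕ) - (m + 1),
          by have := x.isLt; simp only [SimplexCategory.len_mk]; omega⟩ : ℕ) := by
  have h0 := Qfun_val_gt φ.toOrderHom x h
  simp only [SimplexCategory.len_mk] at h0
  rw [natApp_of_le _ (show (x : ℕ) - (m + 1) ≤ m by have := x.isLt; omega)] at h0
  exact h0

/-- The four maps of the basic pushout square. -/
def poF (n : ℕ) : Q.obj (SimplexCategory.mk 0) ⟶ Q.obj (SimplexCategory.mk n) :=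
  Q.map (vert n (Fin.last n))

def poG : Q.obj (SimplexCategory.mk 0) ⟶ Q.obj (SimplexCategory.mk 1) :=
  Q.map (vert 1 0)

def poH (n : ℕ) : Q.obj (SimplexCategory.mk n) ⟶ Q.obj (SimplexCategory.mk (n + 1)) :=
  Q.map (dlast n)

def poK (n : ℕ) : Q.obj (SimplexCategory.mk 1) ⟶ Q.obj (SimplexCategory.mk (n + 1)) :=
  Q.map (edgeIncl (n + 1) ⟨n, Nat.lt_succ_self n⟩)

lemma poF_val (x) : (((poF n).toOrderHom x : Fin (2 * n + 2)) : ℕ)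
    = if (x : ℕ) = 0 then 0 else 2 * n + 1 := by
  unfold poF
  have hx : (x : ℕ) < 2 := x.isLt
  by_cases h : (x : ℕ) ≤ 0
  · have h0 := Qmap_val_le (vert n (Fin.last n)) x h
    rw [h0, vert_val, if_pos (by omega), Fin.val_last]
    omega
  · have h0 := Qmap_val_gt (vert n (Fin.last n)) x h
    rw [h0, vert_val, if_neg (by omega), Fin.val_last]
    omega

lemma poG_val (x) : ((poG.toOrderHom x : Fin 4) : ℕ) = (x : ℕ) + 1 := by
  unfold poG
  have hx : (x : ℕ) < 2 := x.isLt
  by_cases h : (x : ℕ) ≤ 0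
  · rw [Qmap_val_le (vert 1 0) x h, vert_val]; simp [Q]; omega
  · rw [Qmap_val_gt (vert 1 0) x h, vert_val]; simp; omega

lemma poH_val (x) : (((poH n).toOrderHom x : Fin (2 * n + 4)) : ℕ) = (x : ℕ) + 1 := by
  unfold poH
  have hx : (x : ℕ) < 2 * n + 2 := x.isLt
  by_cases h : (x : ℕ) ≤ n
  · rw [Qmap_val_le (dlast n) x h, dlast_val]; simp; omega
  · rw [Qmap_val_gt (dlast n) x h, dlast_val]; simp; omega

lemma poK_val (x) : (((poK n).toOrderHom x : Fin (2 * n + 4)) : ℕ)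
    = if (x : ℕ) ≤ 1 then (x : ℕ) else (x : ℕ) + 2 * n := by
  unfold poK
  have hx : (x : ℕ) < 4 := x.isLt
  by_cases h : (x : ℕ) ≤ 1
  · rw [Qmap_val_le (edgeIncl (n + 1) ⟨n, Nat.lt_succ_self n⟩) x h, edgeIncl_val, if_pos h]
    show n + 1 - (n + (1 - (x : ℕ))) = (x : ℕ)
    omega
  · rw [Qmap_val_gt (edgeIncl (n + 1) ⟨n, Nat.lt_succ_self n⟩) x h, edgeIncl_val, if_neg h]
    show n + 1 + 1 + (n + ((x : ℕ) - (1 + 1))) = (x : ℕ) + 2 * n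
    omega

lemma po_comm (n : ℕ) : poF n ≫ poH n = poG ≫ poK n := by
  refine homEq fun x => ?_
  rw [comp_val, comp_val, poH_val]
  rw [show (((poK n).toOrderHom (poG.toOrderHom x) : Fin (2*n+4)) : ℕ)
      = if ((poG.toOrderHom x : Fin 4) : ℕ) ≤ 1 then ((poG.toOrderHom x : Fin 4) : ℕ)
        else ((poG.toOrderHom x : Fin 4) : ℕ) + 2 * n from poK_val _]
  rw [poF_val, poG_val]
  have hx : (x : ℕ) < 2 := x.isLt
  by_cases h : (x : ℕ) = 0
  · rw [if_pos h, h]; norm_num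
  · have h1 : (x : ℕ) = 1 := by omega
    rw [if_neg h, h1]
    norm_num
    omega

lemma poF_active (n : ℕ) : IsActive (poF n) := by
  constructor
  · apply Fin.ext
    rw [poF_val]
    norm_num
  · apply Fin.ext
    rw [poF_val, Fin.val_last, Fin.val_last]
    show (if (1 : ℕ) = 0 then 0 else 2 * n + 1) = 2 * n + 1
    norm_num

lemma poG_inert : IsInert poG := by
  intro i
  have h1 := poG_val i.succ
  have h2 := poG_val i.castSucc
  rw [h1, h2]
  simp

end Qvals
/-! ### The basic pushout square in `Δ` -/

section Pushout
variable {n : ℕ}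

lemma mkQlt {k : ℕ} (j : ℕ) (h : j < 2 * k + 2) :
    j < (Q.obj (SimplexCategory.mk k)).len + 1 := h

variable (s : PushoutCocone (poF n) poG)

lemma po_cond (z : Fin ((Q.obj (SimplexCategory.mk 0)).len + 1)) :
    s.inl.toOrderHom ((poF n).toOrderHom z) = s.inr.toOrderHom (poG.toOrderHom z) := by
  have h : (poF n ≫ s.inl).toOrderHom z = (poG ≫ s.inr).toOrderHom z := by
    rw [s.condition]
  rwa [comp_val, comp_val] at h

lemma po_cond0 (u : Fin ((Q.obj (SimplexCategory.mk n)).len + 1))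
    (v : Fin ((Q.obj (SimplexCategory.mk 1)).len + 1)) (hu : (u : ℕ) = 0) (hv : (v : ℕ) = 1) :
    (s.inl.toOrderHom u : ℕ) = (s.inr.toOrderHom v : ℕ) := by
  have e1 : u = (poF n).toOrderHom 0 := Fin.ext (by rw [poF_val]; simp [hu])
  have e2 : v = poG.toOrderHom 0 := Fin.ext (by rw [poG_val]; simp [hv])
  rw [e1, e2]
  exact congrArg Fin.val (po_cond s 0)

lemma po_cond1 (u : Fin ((Q.obj (SimplexCategory.mk n)).len + 1))
    (v : Fin ((Q.obj (SimplexCategory.mk 1)).len + 1))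
    (hu : (u : ℕ) = 2 * n + 1) (hv : (v : ℕ) = 2) :
    (s.inl.toOrderHom u : ℕ) = (s.inr.toOrderHom v : ℕ) := by
  have e1 : u = (poF n).toOrderHom 1 := Fin.ext (by rw [poF_val]; simp [hu, Q])
  have e2 : v = poG.toOrderHom 1 := Fin.ext (by rw [poG_val]; simp [hv, Q])
  rw [e1, e2]
  exact congrArg Fin.val (po_cond s 1)

/-- The underlying function of the descent map. -/
def poDescFun : Fin ((Q.obj (SimplexCategory.mk (n + 1))).len + 1) → Fin (s.pt.len + 1) :=
  fun j =>
    if (j : ℕ) = 0 then s.inr.toOrderHom ⟨0, mkQlt _ (by omega)⟩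
    else if (j : ℕ) ≤ 2 * n + 2 then
      s.inl.toOrderHom ⟨min ((j : ℕ) - 1) (2 * n + 1),
        mkQlt _ (Nat.lt_succ_of_le (min_le_right _ _))⟩
    else s.inr.toOrderHom ⟨3, mkQlt _ (by omega)⟩

lemma poDescFun_zero (j : Fin ((Q.obj (SimplexCategory.mk (n + 1))).len + 1))
    (hj : (j : ℕ) = 0) :
    poDescFun s j = s.inr.toOrderHom ⟨0, mkQlt _ (by omega)⟩ := by
  rw [poDescFun, if_pos hj]

lemma poDescFun_mid (j : Fin ((Q.obj (SimplexCategory.mk (n + 1))).len + 1))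
    (hj0 : (j : ℕ) ≠ 0) (hj : (j : ℕ) ≤ 2 * n + 2) :
    poDescFun s j = s.inl.toOrderHom ⟨(j : ℕ) - 1, mkQlt _ (by omega)⟩ := by
  rw [poDescFun, if_neg hj0, if_pos hj]
  congr 1
  exact Fin.ext (show min ((j : ℕ) - 1) (2 * n + 1) = (j : ℕ) - 1 by omega)

lemma poDescFun_top (j : Fin ((Q.obj (SimplexCategory.mk (n + 1))).len + 1))
    (hj : ¬ (j : ℕ) ≤ 2 * n + 2) :
    poDescFun s j = s.inr.toOrderHom ⟨3, mkQlt _ (by omega)⟩ := by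
  rw [poDescFun, if_neg (by omega), if_neg hj]

lemma po_mid_lb (w : Fin ((Q.obj (SimplexCategory.mk n)).len + 1)) :
    s.inr.toOrderHom ⟨0, mkQlt 0 (by omega)⟩ ≤ s.inl.toOrderHom w := by
  have h1 : s.inr.toOrderHom ⟨0, mkQlt 0 (by omega)⟩
      ≤ s.inr.toOrderHom ⟨1, mkQlt 1 (by omega)⟩ :=
    s.inr.toOrderHom.monotone (by rw [Fin.le_def]; exact show (0 : ℕ) ≤ 1 by omega)
  have h2 : (s.inl.toOrderHom (⟨0, mkQlt 0 (by omega)⟩ :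
        Fin ((Q.obj (SimplexCategory.mk n)).len + 1)) : ℕ)
      = (s.inr.toOrderHom ⟨1, mkQlt 1 (by omega)⟩ : ℕ) :=
    po_cond0 s _ _ rfl rfl
  have h3 : s.inl.toOrderHom (⟨0, mkQlt 0 (by omega)⟩ :
        Fin ((Q.obj (SimplexCategory.mk n)).len + 1)) ≤ s.inl.toOrderHom w :=
    s.inl.toOrderHom.monotone (by rw [Fin.le_def]; exact show (0 : ℕ) ≤ (w : ℕ) by omega)
  calc s.inr.toOrderHom ⟨0, mkQlt 0 (by omega)⟩
      ≤ s.inr.toOrderHom ⟨1, mkQlt 1 (by omega)⟩ := h1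
    _ = s.inl.toOrderHom ⟨0, mkQlt 0 (by omega)⟩ := Fin.ext h2.symm
    _ ≤ s.inl.toOrderHom w := h3

lemma po_mid_ub (w : Fin ((Q.obj (SimplexCategory.mk n)).len + 1)) :
    s.inl.toOrderHom w ≤ s.inr.toOrderHom ⟨3, mkQlt 3 (by omega)⟩ := by
  have hw : (w : ℕ) < 2 * n + 2 := w.isLt
  have h1 : s.inl.toOrderHom w ≤ s.inl.toOrderHom ⟨2 * n + 1, mkQlt _ (by omega)⟩ :=
    s.inl.toOrderHom.monotone (by
      rw [Fin.le_def]; exact show (w : ℕ) ≤ 2 * n + 1 by omega)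
  have h2 : (s.inl.toOrderHom (⟨2 * n + 1, mkQlt _ (by omega)⟩ :
        Fin ((Q.obj (SimplexCategory.mk n)).len + 1)) : ℕ)
      = (s.inr.toOrderHom ⟨2, mkQlt 2 (by omega)⟩ : ℕ) :=
    po_cond1 s _ _ rfl rfl
  have h3 : s.inr.toOrderHom (⟨2, mkQlt 2 (by omega)⟩ :
        Fin ((Q.obj (SimplexCategory.mk 1)).len + 1))
      ≤ s.inr.toOrderHom ⟨3, mkQlt 3 (by omega)⟩ :=
    s.inr.toOrderHom.monotone (by rw [Fin.le_def]; exact show (2 : ℕ) ≤ 3 by omega)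
  calc s.inl.toOrderHom w ≤ s.inl.toOrderHom ⟨2 * n + 1, mkQlt _ (by omega)⟩ := h1
    _ = s.inr.toOrderHom ⟨2, mkQlt 2 (by omega)⟩ := Fin.ext h2
    _ ≤ s.inr.toOrderHom ⟨3, mkQlt 3 (by omega)⟩ := h3

lemma poDescFun_mono : Monotone (poDescFun s) := by
  intro a b hab
  have hab' : (a : ℕ) ≤ (b : ℕ) := hab
  have hb : (b : ℕ) < 2 * (n + 1) + 2 := b.isLt
  by_cases ha0 : (a : ℕ) = 0
  · rw [poDescFun_zero s a ha0]
    by_cases hb0 : (b : ℕ) = 0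
    · rw [poDescFun_zero s b hb0]
    · by_cases hbm : (b : ℕ) ≤ 2 * n + 2
      · rw [poDescFun_mid s b hb0 hbm]
        exact po_mid_lb s _
      · rw [poDescFun_top s b hbm]
        exact s.inr.toOrderHom.monotone (by
          rw [Fin.le_def]; exact show (0 : ℕ) ≤ 3 by omega)
  · by_cases ham : (a : ℕ) ≤ 2 * n + 2
    · rw [poDescFun_mid s a ha0 ham]
      by_cases hbm : (b : ℕ) ≤ 2 * n + 2
      · rw [poDescFun_mid s b (by omega) hbm]
        exact s.inl.toOrderHom.monotone (by
          rw [Fin.le_def]; exact show (a : ℕ) - 1 ≤ (b : ℕ) - 1 by omega)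
      · rw [poDescFun_top s b hbm]
        exact po_mid_ub s _
    · rw [poDescFun_top s a ham, poDescFun_top s b (by omega)]

/-- The descent map of the pushout. -/
def poDesc : Q.obj (SimplexCategory.mk (n + 1)) ⟶ s.pt :=
  SimplexCategory.Hom.mk ⟨poDescFun s, poDescFun_mono s⟩

lemma poDesc_val (j) : (poDesc s).toOrderHom j = poDescFun s j := rfl

lemma po_fac_left : poH n ≫ poDesc s = s.inl := by
  refine homEq fun x => ?_
  rw [comp_val, poDesc_val]
  have hx : (x : ℕ) < 2 * n + 2 := x.isLt
  have hH := poH_val (n := n) x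
  rw [poDescFun_mid s _ (by omega) (by omega)]
  exact congrArg (fun z => (s.inl.toOrderHom z : ℕ))
    (Fin.ext (show ((poH n).toOrderHom x : ℕ) - 1 = (x : ℕ) by omega))

lemma po_fac_right : poK n ≫ poDesc s = s.inr := by
  refine homEq fun x => ?_
  rw [comp_val, poDesc_val]
  have hx : (x : ℕ) < 4 := x.isLt
  have hK := poK_val (n := n) x
  by_cases h0 : (x : ℕ) = 0
  · rw [poDescFun_zero s _ (by rw [hK]; simp [h0])]
    exact congrArg (fun z => (s.inr.toOrderHom z : ℕ)) (Fin.ext (by simp [h0]))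
  · by_cases h1 : (x : ℕ) = 1
    · rw [poDescFun_mid s _ (by rw [hK, if_pos (by omega)]; omega)
        (by rw [hK, if_pos (by omega)]; omega)]
      refine Eq.trans (po_cond0 s _ x ?_ h1) rfl
      show ((poK n).toOrderHom x : ℕ) - 1 = 0
      rw [hK, if_pos (by omega)]
      omega
    · by_cases h2 : (x : ℕ) = 2
      · rw [poDescFun_mid s _ (by rw [hK, if_neg (by omega)]; omega)
          (by rw [hK, if_neg (by omega)]; omega)]
        refine Eq.trans (po_cond1 s _ x ?_ h2) rfl
        show ((poK n).toOrderHom x : ℕ) - 1 = 2 * n + 1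
        rw [hK, if_neg (by omega)]
        omega
      · have h3 : (x : ℕ) = 3 := by omega
        rw [poDescFun_top s _ (by rw [hK, if_neg (by omega)]; omega)]
        exact congrArg (fun z => (s.inr.toOrderHom z : ℕ)) (Fin.ext (by simp [h3]))

lemma po_uniq (m : Q.obj (SimplexCategory.mk (n + 1)) ⟶ s.pt)
    (hm1 : poH n ≫ m = s.inl) (hm2 : poK n ≫ m = s.inr) : m = poDesc s := by
  refine homEq fun x => ?_
  have hx : (x : ℕ) < 2 * (n + 1) + 2 := x.isLt
  have hKm : ∀ z, (m.toOrderHom ((poK n).toOrderHom z) : ℕ) = (s.inr.toOrderHom z : ℕ) := by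
    intro z
    have h : ((poK n ≫ m).toOrderHom z : ℕ) = (s.inr.toOrderHom z : ℕ) := by rw [hm2]
    rwa [comp_val] at h
  have hHm : ∀ z, (m.toOrderHom ((poH n).toOrderHom z) : ℕ) = (s.inl.toOrderHom z : ℕ) := by
    intro z
    have h : ((poH n ≫ m).toOrderHom z : ℕ) = (s.inl.toOrderHom z : ℕ) := by rw [hm1]
    rwa [comp_val] at h
  rw [poDesc_val]
  by_cases h0 : (x : ℕ) = 0
  · rw [poDescFun_zero s x h0]
    have e : x = (poK n).toOrderHom ⟨0, mkQlt 0 (by omega)⟩ :=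
      Fin.ext (by rw [poK_val]; simp [h0])
    rw [e]
    exact hKm _
  · by_cases hmid : (x : ℕ) ≤ 2 * n + 2
    · rw [poDescFun_mid s x h0 hmid]
      have e : x = (poH n).toOrderHom ⟨(x : ℕ) - 1, mkQlt _ (by omega)⟩ :=
        Fin.ext (by rw [poH_val]; simp; omega)
      conv_lhs => rw [e]
      exact hHm _
    · rw [poDescFun_top s x hmid]
      have e : x = (poK n).toOrderHom ⟨3, mkQlt 3 (by omega)⟩ :=
        Fin.ext (by rw [poK_val]; simp; omega)
      rw [e]
      exact hKm _

lemma po_isPushout (n : ℕ) : IsPushout (poF n) poG (poH n) (poK n) :=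
  IsPushout.of_isColimit
    (PushoutCocone.IsColimit.mk (po_comm n) (fun s => poDesc s)
      (fun s => po_fac_left s) (fun s => po_fac_right s)
      (fun s m h1 h2 => po_uniq s m h1 h2))

end Pushout
/-! ### Pullbacks of types, elementwise -/

lemma isPullback_existsUnique {P A B C' : Type} {fst : P ⟶ A} {snd : P ⟶ B}
    {f : A ⟶ C'} {g : B ⟶ C'} (hP : IsPullback fst snd f g)
    (a : A) (b : B) (hab : f a = g b) :
    ∃! p : P, fst p = a ∧ snd p = b := by
  obtain ⟨p, h1, h2⟩ := Types.exists_of_isPullback hP a b hab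
  exact ⟨p, ⟨h1, h2⟩, fun y hy => Types.ext_of_isPullback hP (hy.1.trans h1.symm)
    (hy.2.trans h2.symm)⟩

/-! ### The Segal condition for `sd D` -/

section Segal
variable {D : SSet.{0}}

lemma spine_val {X : SSet.{0}} {k : ℕ} (σ : X.obj (op (SimplexCategory.mk k))) (i : Fin k) :
    (spine X k σ).1 i = X.map (edgeIncl k i).op σ := rfl

lemma sd_pullback (hD : IsDecomp D) (n : ℕ) :
    IsPullback ((sdF.obj D).map (dlast n).op)
      ((sdF.obj D).map (edgeIncl (n + 1) ⟨n, Nat.lt_succ_self n⟩).op)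
      ((sdF.obj D).map (vert n (Fin.last n)).op)
      ((sdF.obj D).map (vert 1 0).op) :=
  hD (poF n) poG (poH n) (poK n) (poF_active n) poG_inert (po_isPushout n)

lemma edge_restrict {n : ℕ} (σ : (sdF.obj D).obj (op (SimplexCategory.mk (n + 1))))
    (i : Fin n) :
    (sdF.obj D).map (edgeIncl n i).op ((sdF.obj D).map (dlast n).op σ)
      = (sdF.obj D).map (edgeIncl (n + 1) i.castSucc).op σ := by
  rw [map_map_apply, edgeIncl_comp_dlast]

lemma vert_compat (n : ℕ) (hn : 1 ≤ n) :
    vert n (Fin.last n) ≫ dlast n = vert 1 0 ≫ edgeIncl (n + 1) ⟨n, Nat.lt_succ_self n⟩ := by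
  rw [vert_comp, edgeIncl_eq_mEdge, vert0_comp_mEdge]
  exact congrArg (vert (n + 1)) (Fin.ext (by rw [dlast_val]; simp))

lemma spine_one_bij : Function.Bijective (spine (sdF.obj D) 1) := by
  constructor
  · intro σ τ h
    have h0 := congrFun (congrArg Subtype.val h) 0
    rw [spine_val, spine_val, edgeIncl_one, op_id] at h0
    rwa [FunctorToTypes.map_id_apply, FunctorToTypes.map_id_apply] at h0
  · intro p
    refine ⟨p.1 0, Subtype.ext (funext fun i => ?_)⟩
    have hi : i = 0 := Subsingleton.elim _ _
    subst hi
    rw [spine_val, edgeIncl_one, op_id, FunctorToTypes.map_id_apply]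

lemma spine_succ_bij (hD : IsDecomp D) (n : ℕ) (hn : 1 ≤ n)
    (ih : Function.Bijective (spine (sdF.obj D) n)) :
    Function.Bijective (spine (sdF.obj D) (n + 1)) := by
  set X := sdF.obj D with hX
  constructor
  · intro σ τ h
    have hcomp : ∀ j, X.map (edgeIncl (n + 1) j).op σ = X.map (edgeIncl (n + 1) j).op τ :=
      fun j => by
        have := congrFun (congrArg Subtype.val h) j
        rwa [spine_val, spine_val] at this
    have h1 : X.map (dlast n).op σ = X.map (dlast n).op τ := by
      apply ih.1
      apply Subtype.ext
      funext i
      rw [spine_val, spine_val, edge_restrict, edge_restrict]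
      exact hcomp i.castSucc
    have h2 := hcomp ⟨n, Nat.lt_succ_self n⟩
    have compat : X.map (vert n (Fin.last n)).op (X.map (dlast n).op σ)
        = X.map (vert 1 0).op (X.map (edgeIncl (n + 1) ⟨n, Nat.lt_succ_self n⟩).op σ) := by
      rw [map_map_apply, map_map_apply, vert_compat n hn]
    have EU := isPullback_existsUnique (sd_pullback hD n) _ _ compat
    exact EU.unique ⟨rfl, rfl⟩ ⟨h1.symm, h2.symm⟩
  · intro p
    have hcond : ∀ i j : Fin n, (j : ℕ) = (i : ℕ) + 1 →
        X.map (vert 1 1).op (p.1 i.castSucc) = X.map (vert 1 0).op (p.1 j.castSucc) :=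
      fun i j hij => p.2 i.castSucc j.castSucc (by simpa using hij)
    obtain ⟨σ', hσ'⟩ := ih.2 ⟨fun i => p.1 i.castSucc, hcond⟩
    have hedge : ∀ i : Fin n, X.map (edgeIncl n i).op σ' = p.1 i.castSucc := fun i => by
      have := congrFun (congrArg Subtype.val hσ') i
      rwa [spine_val] at this
    have compat : X.map (vert n (Fin.last n)).op σ'
        = X.map (vert 1 0).op (p.1 (Fin.last n)) := by
      rw [vertn_eq hn, ← map_map_apply, hedge ⟨n - 1, by omega⟩]
      refine p.2 (⟨n - 1, by omega⟩ : Fin n).castSucc (Fin.last n) (by simp; omega)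
    obtain ⟨σ, ⟨hfst, hsnd⟩, -⟩ := isPullback_existsUnique (sd_pullback hD n) σ'
      (p.1 (Fin.last n)) compat
    refine ⟨σ, Subtype.ext (funext fun j => ?_)⟩
    rw [spine_val]
    induction j using Fin.lastCases with
    | last => exact hsnd
    | cast i =>
      rw [← edge_restrict, hfst]
      exact hedge i

lemma spine_bij (hD : IsDecomp D) : ∀ n : ℕ, 1 ≤ n →
    Function.Bijective (spine (sdF.obj D) n) := by
  intro n hn
  induction n, hn using Nat.le_induction with
  | base => exact spine_one_bij
  | succ n hn ih => exact spine_succ_bij hD n hn ih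

end Segal
/-! ### The homotopy category of a Segal simplicial set -/

section Cat
variable {X : SSet.{0}}

lemma mEdge_eq {n : ℕ} {i j i' j' : Fin (n + 1)} (h : i ≤ j) (h' : i' ≤ j')
    (hi : i = i') (hj : j = j') : mEdge n i j h = mEdge n i' j' h' := by
  subst hi; subst hj; rfl

lemma mEdge_eq_edgeIncl {n : ℕ} (i : Fin n) {u v : Fin (n + 1)} (huv : u ≤ v)
    (hu : (u : ℕ) = (i : ℕ)) (hv : (v : ℕ) = (i : ℕ) + 1) :
    mEdge n u v huv = edgeIncl n i := by
  rw [edgeIncl_eq_mEdge]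
  exact mEdge_eq _ _ (Fin.ext (by simp [hu])) (Fin.ext (by simp [hv]))

lemma tri_edge0 {n : ℕ} (i j k : Fin (n + 1)) (hij : i ≤ j) (hjk : j ≤ k) :
    edgeIncl 2 0 ≫ mTri n i j k hij hjk = mEdge n i j hij := by
  refine homEq fun x => ?_
  rw [comp_val, mTri_val, mEdge_val, edgeIncl_val]
  have hx : (x : ℕ) < 2 := x.isLt
  by_cases h : (x : ℕ) = 0
  · simp [h]
  · have h1 : (x : ℕ) = 1 := by omega
    simp [h1]

lemma tri_edge1 {n : ℕ} (i j k : Fin (n + 1)) (hij : i ≤ j) (hjk : j ≤ k) :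
    edgeIncl 2 1 ≫ mTri n i j k hij hjk = mEdge n j k hjk := by
  refine homEq fun x => ?_
  rw [comp_val, mTri_val, mEdge_val, edgeIncl_val]
  have hx : (x : ℕ) < 2 := x.isLt
  by_cases h : (x : ℕ) = 0
  · simp [h]
  · have h1 : (x : ℕ) = 1 := by omega
    simp [h1]

lemma tri_long {n : ℕ} (i j k : Fin (n + 1)) (hij : i ≤ j) (hjk : j ≤ k) :
    act1 2 ≫ mTri n i j k hij hjk = mEdge n i k (hij.trans hjk) := by
  refine homEq fun x => ?_
  rw [comp_val, mTri_val, mEdge_val, act1_val]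
  by_cases h : (x : ℕ) = 0 <;> simp [h]

lemma act1_comp0 (m : ℕ) : vert 1 0 ≫ act1 m = vert m 0 := by
  refine homEq fun x => ?_
  rw [comp_val, act1_val, vert_val, vert_val]
  simp

lemma act1_comp1 (m : ℕ) : vert 1 1 ≫ act1 m = vert m (Fin.last m) := by
  refine homEq fun x => ?_
  rw [comp_val, act1_val, vert_val, vert_val]
  simp

lemma vert_edge0 {n : ℕ} (i : Fin n) : vert 1 0 ≫ edgeIncl n i = vert n i.castSucc := by
  rw [edgeIncl_eq_mEdge, vert0_comp_mEdge]

lemma vert_edge1 {n : ℕ} (i : Fin n) : vert 1 1 ≫ edgeIncl n i = vert n i.succ := by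
  rw [edgeIncl_eq_mEdge, vert1_comp_mEdge]

lemma vert2_0 : vert 2 (0 : Fin 3) = vert 1 0 ≫ edgeIncl 2 (0 : Fin 2) := by
  rw [vert_edge0]
  exact congrArg (vert 2) (Fin.ext (by simp))

lemma vert2_2 : vert 2 (Fin.last 2) = vert 1 1 ≫ edgeIncl 2 (1 : Fin 2) := by
  rw [vert_edge1]
  exact congrArg (vert 2) (Fin.ext (by simp))

/-- Objects of the homotopy category: the `0`-simplices. -/
def SegCat (X : SSet.{0}) : Type := X.obj (op (SimplexCategory.mk 0))

/-- Morphisms: edges with prescribed endpoints. -/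
def SegHom (a b : SegCat X) : Type :=
  {e : X.obj (op (SimplexCategory.mk 1)) //
    X.map (vert 1 0).op e = a ∧ X.map (vert 1 1).op e = b}

variable (hb : ∀ n : ℕ, 1 ≤ n → Function.Bijective (spine X n))

/-- A chain of two composable edges. -/
def chain2 (e f : X.obj (op (SimplexCategory.mk 1)))
    (h : X.map (vert 1 1).op e = X.map (vert 1 0).op f) : SegalChains X 2 :=
  ⟨fun i => if (i : ℕ) = 0 then e else f, by
    intro i j hij
    have hi : (i : ℕ) < 2 := i.isLt
    have hj : (j : ℕ) < 2 := j.isLt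
    show X.map (vert 1 1).op (if (i : ℕ) = 0 then e else f)
      = X.map (vert 1 0).op (if (j : ℕ) = 0 then e else f)
    rw [if_pos (by omega : (i : ℕ) = 0), if_neg (by omega : ¬ (j : ℕ) = 0)]
    exact h⟩

noncomputable def filler2 (c : SegalChains X 2) : X.obj (op (SimplexCategory.mk 2)) :=
  (Equiv.ofBijective _ (hb 2 (by omega))).symm c

lemma spine_filler2 (c : SegalChains X 2) : spine X 2 (filler2 hb c) = c :=
  (Equiv.ofBijective _ (hb 2 (by omega))).apply_symm_apply c

lemma filler2_edge0 (e f : X.obj (op (SimplexCategory.mk 1)))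
    (h : X.map (vert 1 1).op e = X.map (vert 1 0).op f) :
    X.map (edgeIncl 2 0).op (filler2 hb (chain2 e f h)) = e := by
  have h0 := congrFun (congrArg Subtype.val (spine_filler2 hb (chain2 e f h))) 0
  rw [spine_val] at h0
  refine h0.trans ?_
  show (if ((0 : Fin 2) : ℕ) = 0 then e else f) = e
  simp

lemma filler2_edge1 (e f : X.obj (op (SimplexCategory.mk 1)))
    (h : X.map (vert 1 1).op e = X.map (vert 1 0).op f) :
    X.map (edgeIncl 2 1).op (filler2 hb (chain2 e f h)) = f := by
  have h0 := congrFun (congrArg Subtype.val (spine_filler2 hb (chain2 e f h))) 1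
  rw [spine_val] at h0
  refine h0.trans ?_
  show (if ((1 : Fin 2) : ℕ) = 0 then e else f) = f
  simp

lemma filler2_unique (e f : X.obj (op (SimplexCategory.mk 1)))
    (h : X.map (vert 1 1).op e = X.map (vert 1 0).op f)
    (σ2 : X.obj (op (SimplexCategory.mk 2)))
    (h0 : X.map (edgeIncl 2 0).op σ2 = e) (h1 : X.map (edgeIncl 2 1).op σ2 = f) :
    filler2 hb (chain2 e f h) = σ2 := by
  apply (hb 2 (by omega)).1
  rw [spine_filler2]
  apply Subtype.ext
  funext i
  rw [spine_val]
  have hi : (i : ℕ) < 2 := i.isLt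
  by_cases hx : (i : ℕ) = 0
  · have hi0 : i = 0 := Fin.ext (by simpa using hx)
    subst hi0
    rw [h0]
    show (if ((0 : Fin 2) : ℕ) = 0 then e else f) = e
    simp
  · have hi1 : i = 1 := Fin.ext (by simp; omega)
    subst hi1
    rw [h1]
    show (if ((1 : Fin 2) : ℕ) = 0 then e else f) = f
    simp

/-- A chain of three composable edges. -/
def chain3 (e f g : X.obj (op (SimplexCategory.mk 1)))
    (h1 : X.map (vert 1 1).op e = X.map (vert 1 0).op f)
    (h2 : X.map (vert 1 1).op f = X.map (vert 1 0).op g) : SegalChains X 3 :=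
  ⟨fun i => if (i : ℕ) = 0 then e else if (i : ℕ) = 1 then f else g, by
    intro i j hij
    have hi : (i : ℕ) < 3 := i.isLt
    have hj : (j : ℕ) < 3 := j.isLt
    show X.map (vert 1 1).op (if (i : ℕ) = 0 then e else if (i : ℕ) = 1 then f else g)
      = X.map (vert 1 0).op (if (j : ℕ) = 0 then e else if (j : ℕ) = 1 then f else g)
    by_cases hi0 : (i : ℕ) = 0
    · rw [if_pos hi0, if_neg (by omega), if_pos (by omega)]
      exact h1
    · rw [if_neg hi0, if_pos (by omega), if_neg (by omega), if_neg (by omega)]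
      exact h2⟩

noncomputable def filler3 (c : SegalChains X 3) : X.obj (op (SimplexCategory.mk 3)) :=
  (Equiv.ofBijective _ (hb 3 (by omega))).symm c

lemma spine_filler3 (c : SegalChains X 3) : spine X 3 (filler3 hb c) = c :=
  (Equiv.ofBijective _ (hb 3 (by omega))).apply_symm_apply c

lemma filler3_edge0 (e f g h1 h2) :
    X.map (edgeIncl 3 (0 : Fin 3)).op (filler3 hb (chain3 e f g h1 h2)) = e := by
  have h0 := congrFun (congrArg Subtype.val (spine_filler3 hb (chain3 e f g h1 h2))) 0
  rw [spine_val] at h0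
  refine h0.trans ?_
  show (if ((0 : Fin 3) : ℕ) = 0 then e else if ((0 : Fin 3) : ℕ) = 1 then f else g) = e
  simp

lemma filler3_edge1 (e f g h1 h2) :
    X.map (edgeIncl 3 (1 : Fin 3)).op (filler3 hb (chain3 e f g h1 h2)) = f := by
  have h0 := congrFun (congrArg Subtype.val (spine_filler3 hb (chain3 e f g h1 h2))) 1
  rw [spine_val] at h0
  refine h0.trans ?_
  show (if ((1 : Fin 3) : ℕ) = 0 then e else if ((1 : Fin 3) : ℕ) = 1 then f else g) = f
  simp

lemma filler3_edge2 (e f g h1 h2) :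
    X.map (edgeIncl 3 (2 : Fin 3)).op (filler3 hb (chain3 e f g h1 h2)) = g := by
  have h0 := congrFun (congrArg Subtype.val (spine_filler3 hb (chain3 e f g h1 h2))) 2
  rw [spine_val] at h0
  refine h0.trans ?_
  show (if ((2 : Fin 3) : ℕ) = 0 then e else if ((2 : Fin 3) : ℕ) = 1 then f else g) = g
  simp

/-- The identity edge. -/
def segId (a : SegCat X) : SegHom a a :=
  ⟨X.map collapse.op a,
    by change X.obj (op (SimplexCategory.mk 0)) at a
       rw [map_map_apply, vert_comp_collapse, op_id, FunctorToTypes.map_id_apply],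
    by change X.obj (op (SimplexCategory.mk 0)) at a
       rw [map_map_apply, vert_comp_collapse, op_id, FunctorToTypes.map_id_apply]⟩

/-- Composition of edges via a filler. -/
noncomputable def segComp {a b c : SegCat X} (e : SegHom a b) (f : SegHom b c) :
    SegHom a c :=
  ⟨X.map (act1 2).op (filler2 hb (chain2 e.1 f.1 (e.2.2.trans f.2.1.symm))),
    by
      rw [map_map_apply, act1_comp0, vert2_0, ← map_map_apply, filler2_edge0]
      exact e.2.1,
    by
      rw [map_map_apply, act1_comp1, vert2_2, ← map_map_apply, filler2_edge1]
      exact f.2.2⟩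

lemma seg_id_comp {a b : SegCat X} (e : SegHom a b) : segComp hb (segId a) e = e := by
  apply Subtype.ext
  show X.map (act1 2).op
    (filler2 hb (chain2 (segId a).1 e.1 ((segId a).2.2.trans e.2.1.symm))) = e.1
  have hfill : filler2 hb (chain2 (segId a).1 e.1 ((segId a).2.2.trans e.2.1.symm))
      = X.map (mTri 1 0 0 1 (by decide) (by decide)).op e.1 := by
    refine filler2_unique hb _ _ _ _ ?_ ?_
    · rw [map_map_apply, tri_edge0, mEdge_self, ← map_map_apply, e.2.1]
      rfl
    · rw [map_map_apply, tri_edge1, mEdge_id, op_id, FunctorToTypes.map_id_apply]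
  rw [hfill, map_map_apply, tri_long]
  rw [show mEdge 1 0 1 ((by decide : (0:Fin 2) ≤ 0).trans (by decide)) = 𝟙 (SimplexCategory.mk 1)
    from mEdge_id, op_id, FunctorToTypes.map_id_apply]

lemma seg_comp_id {a b : SegCat X} (e : SegHom a b) : segComp hb e (segId b) = e := by
  apply Subtype.ext
  show X.map (act1 2).op
    (filler2 hb (chain2 e.1 (segId b).1 (e.2.2.trans (segId b).2.1.symm))) = e.1
  have hfill : filler2 hb (chain2 e.1 (segId b).1 (e.2.2.trans (segId b).2.1.symm))
      = X.map (mTri 1 0 1 1 (by decide) (by decide)).op e.1 := by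
    refine filler2_unique hb _ _ _ _ ?_ ?_
    · rw [map_map_apply, tri_edge0, mEdge_id, op_id, FunctorToTypes.map_id_apply]
    · rw [map_map_apply, tri_edge1, mEdge_self, ← map_map_apply, e.2.2]
      rfl
  rw [hfill, map_map_apply, tri_long]
  rw [show mEdge 1 0 1 ((by decide : (0:Fin 2) ≤ 1).trans (by decide)) = 𝟙 (SimplexCategory.mk 1)
    from mEdge_id, op_id, FunctorToTypes.map_id_apply]

lemma seg_assoc {a b c d : SegCat X} (e : SegHom a b) (f : SegHom b c) (g : SegHom c d) :
    segComp hb (segComp hb e f) g = segComp hb e (segComp hb f g) := by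
  have h1 : X.map (vert 1 1).op e.1 = X.map (vert 1 0).op f.1 := e.2.2.trans f.2.1.symm
  have h2 : X.map (vert 1 1).op f.1 = X.map (vert 1 0).op g.1 := f.2.2.trans g.2.1.symm
  set σ3 := filler3 hb (chain3 e.1 f.1 g.1 h1 h2) with hσ3
  have hA : filler2 hb (chain2 e.1 f.1 h1)
      = X.map (mTri 3 0 1 2 (by decide) (by decide)).op σ3 := by
    refine filler2_unique hb _ _ _ _ ?_ ?_
    · rw [map_map_apply, tri_edge0,
        mEdge_eq_edgeIncl (0 : Fin 3) _ (by decide) (by decide)]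
      exact filler3_edge0 _ _ _ _ _ _
    · rw [map_map_apply, tri_edge1,
        mEdge_eq_edgeIncl (1 : Fin 3) _ (by decide) (by decide)]
      exact filler3_edge1 _ _ _ _ _ _
  have hB : filler2 hb (chain2 f.1 g.1 h2)
      = X.map (mTri 3 1 2 3 (by decide) (by decide)).op σ3 := by
    refine filler2_unique hb _ _ _ _ ?_ ?_
    · rw [map_map_apply, tri_edge0,
        mEdge_eq_edgeIncl (1 : Fin 3) _ (by decide) (by decide)]
      exact filler3_edge1 _ _ _ _ _ _
    · rw [map_map_apply, tri_edge1,
        mEdge_eq_edgeIncl (2 : Fin 3) _ (by decide) (by decide)]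
      exact filler3_edge2 _ _ _ _ _ _
  have hEF : (segComp hb e f).1 = X.map (mEdge 3 0 2 (by decide)).op σ3 := by
    show X.map (act1 2).op (filler2 hb (chain2 e.1 f.1 (e.2.2.trans f.2.1.symm))) = _
    rw [show (e.2.2.trans f.2.1.symm : X.map (vert 1 1).op e.1 = X.map (vert 1 0).op f.1)
      = h1 from rfl]
    rw [hA, map_map_apply, tri_long]
  have hFG : (segComp hb f g).1 = X.map (mEdge 3 1 3 (by decide)).op σ3 := by
    show X.map (act1 2).op (filler2 hb (chain2 f.1 g.1 (f.2.2.trans g.2.1.symm))) = _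
    rw [show (f.2.2.trans g.2.1.symm : X.map (vert 1 1).op f.1 = X.map (vert 1 0).op g.1)
      = h2 from rfl]
    rw [hB, map_map_apply, tri_long]
  apply Subtype.ext
  have hC : filler2 hb (chain2 (segComp hb e f).1 g.1
      ((segComp hb e f).2.2.trans g.2.1.symm))
      = X.map (mTri 3 0 2 3 (by decide) (by decide)).op σ3 := by
    refine filler2_unique hb _ _ _ _ ?_ ?_
    · rw [map_map_apply, tri_edge0]
      exact (congrArg (fun q => X.map q.op σ3) (mEdge_eq _ _ rfl rfl)).trans hEF.symm
    · rw [map_map_apply, tri_edge1,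
        mEdge_eq_edgeIncl (2 : Fin 3) _ (by decide) (by decide)]
      exact filler3_edge2 _ _ _ _ _ _
  have hD : filler2 hb (chain2 e.1 (segComp hb f g).1
      (e.2.2.trans (segComp hb f g).2.1.symm))
      = X.map (mTri 3 0 1 3 (by decide) (by decide)).op σ3 := by
    refine filler2_unique hb _ _ _ _ ?_ ?_
    · rw [map_map_apply, tri_edge0,
        mEdge_eq_edgeIncl (0 : Fin 3) _ (by decide) (by decide)]
      exact filler3_edge0 _ _ _ _ _ _
    · rw [map_map_apply, tri_edge1]
      exact (congrArg (fun q => X.map q.op σ3) (mEdge_eq _ _ rfl rfl)).trans hFG.symm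
  show X.map (act1 2).op (filler2 hb (chain2 (segComp hb e f).1 g.1
      ((segComp hb e f).2.2.trans g.2.1.symm)))
    = X.map (act1 2).op (filler2 hb (chain2 e.1 (segComp hb f g).1
      (e.2.2.trans (segComp hb f g).2.1.symm)))
  rw [hC, hD, map_map_apply, map_map_apply, tri_long, tri_long]

/-- The homotopy category of a (Segal) simplicial set. -/
noncomputable def segCategory : SmallCategory (SegCat X) where
  Hom a b := SegHom a b
  id a := segId a
  comp {a b c} e f := segComp hb e f
  id_comp e := seg_id_comp hb e
  comp_id e := seg_comp_id hb e
  assoc e f g := seg_assoc hb e f g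

end Cat
/-! ### Comparison with the nerve -/

section NerveCmp
variable {X : SSet.{0}} (hb : ∀ n : ℕ, 1 ≤ n → Function.Bijective (spine X n))

lemma segHomEq {a a' b b' : SegCat X} (ha : a = a') (hbb : b = b')
    (u : SegHom a b) (v : SegHom a' b') (hval : u.1 = v.1) :
    letI := segCategory hb
    u = eqToHom ha ≫ v ≫ eqToHom hbb.symm := by
  letI := segCategory hb
  subst ha
  subst hbb
  rw [eqToHom_refl, eqToHom_refl]
  rw [Category.id_comp]
  erw [Category.comp_id]
  exact Subtype.ext hval

/-- Vertices of a simplex. -/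
def vObj {n : ℕ} (σ : X.obj (op (SimplexCategory.mk n))) (i : Fin (n + 1)) : SegCat X :=
  X.map (vert n i).op σ

lemma vObj_zero (σ : X.obj (op (SimplexCategory.mk 0))) (i : Fin 1) : vObj σ i = σ := by
  have e : vert 0 i = 𝟙 (SimplexCategory.mk 0) := homEq fun x => by
    rw [vert_val, id_val]
    have h1 : (x : ℕ) < 0 + 1 := x.isLt
    have h2 : (i : ℕ) < 0 + 1 := i.isLt
    omega
  show X.map (vert 0 i).op σ = σ
  rw [e, op_id, FunctorToTypes.map_id_apply]

/-- Edges of a simplex, as morphisms of the homotopy category. -/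
def edgeHomVal {n : ℕ} (σ : X.obj (op (SimplexCategory.mk n))) (i j : Fin (n + 1))
    (hij : i ≤ j) : SegHom (vObj σ i) (vObj σ j) :=
  ⟨X.map (mEdge n i j hij).op σ,
    by rw [map_map_apply, vert0_comp_mEdge]; rfl,
    by rw [map_map_apply, vert1_comp_mEdge]; rfl⟩

/-- The comparison functor sending a simplex to its associated composable chain. -/
noncomputable def toNerveF {n : ℕ} (σ : X.obj (op (SimplexCategory.mk n))) :
    @ComposableArrows (SegCat X) (segCategory hb) n :=
  letI := segCategory hb
  { obj := fun i => vObj σ i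
    map := fun {i j} φ => edgeHomVal σ i j (leOfHom φ)
    map_id := fun i => Subtype.ext (by
      show X.map (mEdge n i i _).op σ = (segId (vObj σ i)).1
      rw [mEdge_self, ← map_map_apply]
      rfl)
    map_comp := fun {i j k} φ ψ => Subtype.ext (by
      have hfill : filler2 hb (chain2 (edgeHomVal σ i j (leOfHom φ)).1
          (edgeHomVal σ j k (leOfHom ψ)).1
          ((edgeHomVal σ i j (leOfHom φ)).2.2.trans
            (edgeHomVal σ j k (leOfHom ψ)).2.1.symm))
          = X.map (mTri n i j k (leOfHom φ) (leOfHom ψ)).op σ := by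
        refine filler2_unique hb _ _ _ _ ?_ ?_
        · rw [map_map_apply, tri_edge0]; rfl
        · rw [map_map_apply, tri_edge1]; rfl
      show X.map (mEdge n i k _).op σ
        = (segComp hb (edgeHomVal σ i j (leOfHom φ)) (edgeHomVal σ j k (leOfHom ψ))).1
      show X.map (mEdge n i k _).op σ
        = X.map (act1 2).op (filler2 hb (chain2 (edgeHomVal σ i j (leOfHom φ)).1
          (edgeHomVal σ j k (leOfHom ψ)).1
          ((edgeHomVal σ i j (leOfHom φ)).2.2.trans
            (edgeHomVal σ j k (leOfHom ψ)).2.1.symm)))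
      rw [hfill, map_map_apply, tri_long]) }

/-- The chain of consecutive arrows of a composable chain. -/
def chainOf {n : ℕ} (F : @ComposableArrows (SegCat X) (segCategory hb) n) :
    SegalChains X n :=
  letI := segCategory hb
  ⟨fun i => (Subtype.val (p := fun e => X.map (vert 1 0).op e = F.obj i.castSucc
      ∧ X.map (vert 1 1).op e = F.obj i.succ)
      (F.map (homOfLE (Fin.castSucc_lt_succ (i := i)).le))), by
    intro i j hij
    have h1 := (F.map (homOfLE (Fin.castSucc_lt_succ (i := i)).le)).2.2
    have h2 := (F.map (homOfLE (Fin.castSucc_lt_succ (i := j)).le)).2.1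
    show X.map (vert 1 1).op (F.map (homOfLE (Fin.castSucc_lt_succ (i := i)).le)).1
      = X.map (vert 1 0).op (F.map (homOfLE (Fin.castSucc_lt_succ (i := j)).le)).1
    rw [h1, h2]
    exact congrArg F.obj (Fin.ext (by simp [hij]))⟩

lemma chainOf_toNerve {n : ℕ} (σ : X.obj (op (SimplexCategory.mk n))) :
    chainOf hb (toNerveF hb σ) = spine X n σ := by
  apply Subtype.ext
  funext i
  rw [spine_val]
  show (edgeHomVal σ i.castSucc i.succ _).1 = X.map (edgeIncl n i).op σ
  show X.map (mEdge n i.castSucc i.succ _).op σ = X.map (edgeIncl n i).op σ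
  rw [mEdge_eq_edgeIncl i _ (by simp) (by simp)]

lemma toNerve_bij (n : ℕ) :
    Function.Bijective (fun σ : X.obj (op (SimplexCategory.mk n)) => toNerveF hb σ) := by
  letI := segCategory hb
  rcases Nat.eq_zero_or_pos n with h0 | hpos
  · subst h0
    constructor
    · intro σ τ hst
      have h := congrArg (fun F : ComposableArrows (SegCat X) 0 => F.obj 0) hst
      exact (vObj_zero σ 0).symm.trans ((h : vObj σ 0 = vObj τ 0).trans (vObj_zero τ 0))
    · intro F
      exact ⟨F.obj 0, (ComposableArrows.ext₀ (vObj_zero (F.obj 0) 0)).symm.symm⟩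
  · constructor
    · intro σ τ hst
      apply (hb n hpos).1
      rw [← chainOf_toNerve hb σ, ← chainOf_toNerve hb τ]
      exact congrArg (chainOf hb) hst
    · intro F
      obtain ⟨σ, hσ⟩ := (hb n hpos).2 (chainOf hb F)
      have hedge : ∀ i : Fin n, X.map (edgeIncl n i).op σ
          = (F.map (homOfLE (Fin.castSucc_lt_succ (i := i)).le)).1 := by
        intro i
        have h := congrFun (congrArg Subtype.val hσ) i
        rw [spine_val] at h
        exact h
      have hobj : ∀ i, (toNerveF hb σ).obj i = F.obj i := by
        intro i
        induction i using Fin.lastCases with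
        | last =>
          show vObj σ (Fin.last n) = F.obj (Fin.last n)
          show X.map (vert n (Fin.last n)).op σ = F.obj (Fin.last n)
          rw [vertn_eq hpos, ← map_map_apply, hedge ⟨n - 1, by omega⟩,
            (F.map (homOfLE (Fin.castSucc_lt_succ (i := ⟨n - 1, by omega⟩)).le)).2.2]
          exact congrArg F.obj (Fin.ext (by simp; omega))
        | cast i' =>
          show vObj σ i'.castSucc = F.obj i'.castSucc
          show X.map (vert n i'.castSucc).op σ = F.obj i'.castSucc
          rw [← vert_edge0 i', ← map_map_apply, hedge i',
            (F.map (homOfLE (Fin.castSucc_lt_succ (i := i')).le)).2.1]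
      refine ⟨σ, ComposableArrows.ext hobj ?_⟩
      intro i hi
      refine segHomEq hb (hobj _) (hobj _) _ _ ?_
      show X.map (mEdge n _ _ _).op σ = (F.map' i (i + 1)).1
      rw [mEdge_eq_edgeIncl ⟨i, hi⟩ _ (by simp) (by simp), hedge ⟨i, hi⟩]

lemma toNerve_natural {m n : ℕ} (ψ : SimplexCategory.mk m ⟶ SimplexCategory.mk n)
    (σ : X.obj (op (SimplexCategory.mk n))) :
    toNerveF hb (X.map ψ.op σ)
      = (@nerve (SegCat X) (segCategory hb)).map ψ.op (toNerveF hb σ) := by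
  letI := segCategory hb
  have hobj : ∀ i, (toNerveF hb (X.map ψ.op σ)).obj i
      = ((@nerve (SegCat X) (segCategory hb)).map ψ.op (toNerveF hb σ)).obj i := by
    intro i
    show vObj (X.map ψ.op σ) i = vObj σ (ψ.toOrderHom i)
    show X.map (vert m i).op (X.map ψ.op σ) = X.map (vert n (ψ.toOrderHom i)).op σ
    rw [map_map_apply, vert_comp]
  refine ComposableArrows.ext hobj ?_
  intro i hi
  refine segHomEq hb (hobj _) (hobj _) _ _ ?_
  show X.map (mEdge m ⟨i, by omega⟩ ⟨i + 1, by omega⟩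
      (Fin.mk_le_mk.mpr (by omega))).op (X.map ψ.op σ)
    = X.map (mEdge n (ψ.toOrderHom ⟨i, by simp only [SimplexCategory.len_mk]; omega⟩)
      (ψ.toOrderHom ⟨i + 1, by simp only [SimplexCategory.len_mk]; omega⟩)
      (ψ.toOrderHom.monotone (Fin.mk_le_mk.mpr (by omega)))).op σ
  rw [map_map_apply, mEdge_comp]

/-- The comparison map of simplicial sets. -/
noncomputable def toNerveNat : X ⟶ @nerve (SegCat X) (segCategory hb) where
  app Δ := TypeCat.ofHom fun σ => toNerveF hb (n := Δ.unop.len) σ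
  naturality Δ1 Δ2 f := by
    ext σ
    exact toNerve_natural hb (m := Δ2.unop.len) (n := Δ1.unop.len) f.unop σ

end NerveCmp

theorem statement2 {D : SSet.{0}} (hD : IsDecomp D) :
    (∀ n : ℕ, 2 ≤ n → Function.Bijective (spine (sdF.obj D) n)) ∧
      ∃ (T : Type) (inst : SmallCategory T), Nonempty (@nerve T inst ≅ sdF.obj D) := by
  have hb : ∀ n : ℕ, 1 ≤ n → Function.Bijective (spine (sdF.obj D) n) := spine_bij hD
  constructor
  · intro n hn
    exact hb n (by omega)
  · refine ⟨SegCat (sdF.obj D), segCategory hb, ⟨?_⟩⟩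
    letI := segCategory hb
    haveI : ∀ Δ : SimplexCategoryᵒᵖ, IsIso ((toNerveNat hb).app Δ) := fun Δ =>
      (isIso_iff_bijective _).2 (toNerve_bij hb Δ.unop.len)
    haveI : IsIso (toNerveNat hb) := NatIso.isIso_of_isIso_app _
    exact (asIso (toNerveNat hb)).symm

end DecompPaper
end

section
/- The degreewise assignment sending a k-simplex ([n_0] → ⋯ → [n_k], σ ∈ X_{n_k}) of N(el(X)) to X(α_k)(σ) ∈ (sd X)_k, where α_k : Q[k] → [n_k] is the k-th vertical map of the unique active ladder A(φ) over the underlying sequence φ, defines a simplicial map Λ_X : N(el(X)) → sd(X) for every simplicial set X, and these maps are natural in X, giving a natural transformation Λ : N ∘ el ⇒ sd of endofunctors of sSet; in degree 0, Λ_X sends an n-simplex σ of X to its long edge X(ρ)(σ), where ρ : [1] → [n] is the unique active map. -/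
open CategoryTheory CategoryTheory.Limits Opposite Simplicial

namespace DecompPaper

/-! ### Construction of `Λ` -/

section Lambda

variable {X : SSet.{0}} {k : ℕ}

/-- The composite map `[n_j] ⟶ [n_{j'}]` in the chain underlying `F`. -/
def gTo (F : ComposableArrows (El X) k) {j j' : Fin (k + 1)} (h : j ≤ j') :
    SimplexCategory.mk (chainObj F j) ⟶ SimplexCategory.mk (chainObj F j') :=
  (F.map (homOfLE h)).1

lemma gTo_refl (F : ComposableArrows (El X) k) (j : Fin (k + 1)) :
    gTo F (le_refl j) = 𝟙 _ := by
  unfold gTo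
  rw [show homOfLE (le_refl j) = 𝟙 j from rfl, F.map_id]
  rfl

lemma gTo_trans (F : ComposableArrows (El X) k) {j j' j'' : Fin (k + 1)}
    (h : j ≤ j') (h' : j' ≤ j'') :
    gTo F (h.trans h') = gTo F h ≫ gTo F h' := by
  unfold gTo
  rw [show homOfLE (h.trans h') = homOfLE h ≫ homOfLE h' from rfl, F.map_comp]
  rfl

/-- Natural-number valued application of `gTo`. -/
def gval (F : ComposableArrows (El X) k) {j j' : Fin (k + 1)} (h : j ≤ j') (t : ℕ) : ℕ :=
  natApp (gTo F h).toOrderHom t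

lemma gval_le (F : ComposableArrows (El X) k) {j j' : Fin (k + 1)} (h : j ≤ j') (t : ℕ) :
    gval F h t ≤ chainObj F j' :=
  natApp_le _ t

lemma gval_mono (F : ComposableArrows (El X) k) {j j' : Fin (k + 1)} (h : j ≤ j')
    {s t : ℕ} (hst : s ≤ t) : gval F h s ≤ gval F h t :=
  natApp_mono _ hst

lemma gval_trans (F : ComposableArrows (El X) k) {j j' j'' : Fin (k + 1)}
    (h : j ≤ j') (h' : j' ≤ j'') (t : ℕ) :
    gval F (h.trans h') t = gval F h' (gval F h t) := by
  unfold gval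
  rw [gTo_trans F h h']
  exact natApp_comp (gTo F h).toOrderHom (gTo F h').toOrderHom t

lemma gval_refl (F : ComposableArrows (El X) k) (j : Fin (k + 1)) (t : ℕ) :
    gval F (le_refl j) t = min t (chainObj F j) := by
  unfold gval
  rw [gTo_refl]
  rfl

lemma gval_congr (F : ComposableArrows (El X) k) {j1 j2 i : Fin (k + 1)} (e : j1 = j2)
    (h1 : j1 ≤ i) (h2 : j2 ≤ i) (t : ℕ) : gval F h1 t = gval F h2 t := by
  subst e; rfl

/-- a clamped index below `i`. -/
def idx {k : ℕ} (i : Fin (k + 1)) (s : ℕ) : Fin (k + 1) :=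
  ⟨min s (i : ℕ), by have := i.isLt; omega⟩

lemma idx_le {k : ℕ} (i : Fin (k + 1)) (s : ℕ) : idx i s ≤ i := by
  simp only [idx, Fin.le_def]
  omega

lemma gval_zero_le (F : ComposableArrows (El X) k) {j j' i : Fin (k + 1)}
    (hjj : j ≤ j') (h : j ≤ i) (h' : j' ≤ i) :
    gval F h' 0 ≤ gval F h 0 := by
  have e : gval F h 0 = gval F h' (gval F hjj 0) := by
    rw [← gval_trans F hjj h']
  rw [e]
  exact gval_mono F h' (Nat.zero_le _)

lemma gval_last_le (F : ComposableArrows (El X) k) {j j' i : Fin (k + 1)}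
    (hjj : j ≤ j') (h : j ≤ i) (h' : j' ≤ i) :
    gval F h (chainObj F j) ≤ gval F h' (chainObj F j') := by
  have e : gval F h (chainObj F j) = gval F h' (gval F hjj (chainObj F j)) := by
    rw [← gval_trans F hjj h']
  rw [e]
  exact gval_mono F h' (gval_le F hjj _)

/-- The underlying value function of the active-ladder map `α_i`. -/
def aval (F : ComposableArrows (El X) k) (i : Fin (k + 1)) (t : ℕ) : ℕ :=
  if t ≤ (i : ℕ) then gval F (idx_le i ((i : ℕ) - t)) 0
  else gval F (idx_le i (t - ((i : ℕ) + 1))) (chainObj F (idx i (t - ((i : ℕ) + 1))))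

lemma aval_le (F : ComposableArrows (El X) k) (i : Fin (k + 1)) (t : ℕ) :
    aval F i t ≤ chainObj F i := by
  unfold aval
  split <;> exact gval_le F _ _

lemma aval_of_le (F : ComposableArrows (El X) k) (i : Fin (k + 1)) {t : ℕ} (h : t ≤ (i : ℕ)) :
    aval F i t = gval F (idx_le i ((i : ℕ) - t)) 0 := if_pos h

lemma aval_of_gt (F : ComposableArrows (El X) k) (i : Fin (k + 1)) {t : ℕ} (h : ¬ t ≤ (i : ℕ)) :
    aval F i t = gval F (idx_le i (t - ((i : ℕ) + 1)))
      (chainObj F (idx i (t - ((i : ℕ) + 1)))) := if_neg h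

lemma aval_mono (F : ComposableArrows (El X) k) (i : Fin (k + 1)) {s t : ℕ} (hst : s ≤ t) :
    aval F i s ≤ aval F i t := by
  have h0 : (⟨0, Nat.succ_pos k⟩ : Fin (k + 1)) ≤ i := by
    simp [Fin.le_def]
  by_cases hs : s ≤ (i : ℕ) <;> by_cases ht : t ≤ (i : ℕ)
  · rw [aval_of_le F i hs, aval_of_le F i ht]
    have e : idx i ((i : ℕ) - t) ≤ idx i ((i : ℕ) - s) := by
      simp only [idx, Fin.le_def]; omega
    exact gval_zero_le F e (idx_le i _) (idx_le i _)
  · rw [aval_of_le F i hs, aval_of_gt F i ht]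
    calc gval F (idx_le i ((i : ℕ) - s)) 0
        ≤ gval F h0 0 := by
          refine gval_zero_le F ?_ h0 (idx_le i _)
          simp [Fin.le_def]
      _ ≤ gval F h0 (chainObj F ⟨0, Nat.succ_pos k⟩) :=
          gval_mono F h0 (Nat.zero_le _)
      _ ≤ gval F (idx_le i (t - ((i : ℕ) + 1)))
            (chainObj F (idx i (t - ((i : ℕ) + 1)))) := by
          refine gval_last_le F ?_ h0 (idx_le i _)
          simp [idx, Fin.le_def]
  · omega
  · rw [aval_of_gt F i hs, aval_of_gt F i ht]
    refine gval_last_le F ?_ (idx_le i _) (idx_le i _)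
    simp only [idx, Fin.le_def]
    omega

/-- The `i`-th vertical map of the active ladder over the chain underlying `F`. -/
def amap (F : ComposableArrows (El X) k) (i : Fin (k + 1)) :
    Q.obj (SimplexCategory.mk (i : ℕ)) ⟶ SimplexCategory.mk (chainObj F i) :=
  SimplexCategory.Hom.mk
    ⟨fun t => ⟨aval F i (t : ℕ), Nat.lt_succ_of_le (aval_le F i (t : ℕ))⟩, by
      intro s t hst
      simp only [Fin.mk_le_mk]
      exact aval_mono F i (Fin.le_def.mp hst)⟩

lemma amap_val (F : ComposableArrows (El X) k) (i : Fin (k + 1))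
    (t : Fin (2 * (i : ℕ) + 2)) :
    ((amap F i).toOrderHom t : ℕ) = aval F i (t : ℕ) := rfl

lemma aval_zero (F : ComposableArrows (El X) k) (i : Fin (k + 1)) : aval F i 0 = 0 := by
  rw [aval_of_le F i (Nat.zero_le _)]
  have e : idx i ((i : ℕ) - 0) = i := Fin.ext (by simp [idx])
  rw [gval_congr F e _ (le_refl i), gval_refl]
  simp

lemma aval_top (F : ComposableArrows (El X) k) (i : Fin (k + 1)) :
    aval F i (2 * (i : ℕ) + 1) = chainObj F i := by
  rw [aval_of_gt F i (by omega)]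
  have e : idx i (2 * (i : ℕ) + 1 - ((i : ℕ) + 1)) = i := Fin.ext (by simp [idx]; omega)
  have e2 : chainObj F (idx i (2 * (i : ℕ) + 1 - ((i : ℕ) + 1))) = chainObj F i := by rw [e]
  rw [e2, gval_congr F e _ (le_refl i), gval_refl]
  simp

lemma amap_active (F : ComposableArrows (El X) k) (i : Fin (k + 1)) :
    IsActive (amap F i) := by
  constructor
  · exact Fin.ext (aval_zero F i)
  · exact Fin.ext (aval_top F i)

lemma gval_congr' (F : ComposableArrows (El X) k) {j1 j2 i : Fin (k + 1)} (e : j1 = j2)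
    (h1 : j1 ≤ i) (h2 : j2 ≤ i) :
    gval F h1 (chainObj F j1) = gval F h2 (chainObj F j2) := by
  subst e; rfl

lemma Qfun_delta_top (i : ℕ) (t : Fin (2 * i + 2)) :
    (Qfun (SimplexCategory.δ (Fin.last (i + 1))).toOrderHom t : ℕ) = (t : ℕ) + 1 := by
  have hd : ∀ x : Fin (i + 1),
      ((SimplexCategory.δ (Fin.last (i + 1))).toOrderHom x : ℕ) = (x : ℕ) := by
    intro x
    simp [SimplexCategory.δ, Fin.succAbove_last]
  have hn : ∀ s : ℕ,
      natApp (SimplexCategory.δ (Fin.last (i + 1))).toOrderHom s = min s i := by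
    intro s
    unfold natApp
    rw [hd]
  have ht := t.isLt
  by_cases h : (t : ℕ) ≤ i
  · rw [Qfun_val_le _ t h, hn]
    simp only [SimplexCategory.len_mk]
    omega
  · rw [Qfun_val_gt _ t h, hn]
    simp only [SimplexCategory.len_mk]
    omega

lemma amap_ladder (F : ComposableArrows (El X) k) (i : Fin k) :
    Q.map (SimplexCategory.δ (Fin.last ((i : ℕ) + 1))) ≫ amap F i.succ
      = amap F i.castSucc ≫ chainMap F i := by
  apply SimplexCategory.Hom.ext
  apply OrderHom.ext
  funext t
  apply Fin.ext
  have ht : (t : ℕ) < 2 * (i : ℕ) + 2 := t.isLt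
  have hcs : i.castSucc ≤ i.succ := (Fin.castSucc_lt_succ (i := i)).le
  show ((amap F i.succ).toOrderHom
      ((Q.map (SimplexCategory.δ (Fin.last ((i : ℕ) + 1)))).toOrderHom t) : ℕ)
    = ((chainMap F i).toOrderHom ((amap F i.castSucc).toOrderHom t) : ℕ)
  have hL : ((amap F i.succ).toOrderHom
      ((Q.map (SimplexCategory.δ (Fin.last ((i : ℕ) + 1)))).toOrderHom t) : ℕ)
      = aval F i.succ ((t : ℕ) + 1) := by
    refine (amap_val F i.succ _).trans ?_
    exact congrArg (aval F i.succ) (Qfun_delta_top (i : ℕ) t)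
  have hR : ((chainMap F i).toOrderHom ((amap F i.castSucc).toOrderHom t) : ℕ)
      = gval F hcs (aval F i.castSucc (t : ℕ)) :=
    (natApp_of_le (chainMap F i).toOrderHom (aval_le F i.castSucc (t : ℕ))).symm
  rw [hL, hR]
  by_cases h : (t : ℕ) ≤ (i : ℕ)
  · rw [aval_of_le F i.succ (show (t : ℕ) + 1 ≤ (i.succ : ℕ) by
      simp only [Fin.val_succ]; omega),
      aval_of_le F i.castSucc (show (t : ℕ) ≤ (i.castSucc : ℕ) by
      simp only [Fin.coe_castSucc]; omega)]
    have e : idx i.succ ((i.succ : ℕ) - ((t : ℕ) + 1))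
        = idx i.castSucc ((i.castSucc : ℕ) - (t : ℕ)) := by
      apply Fin.ext
      simp only [idx, Fin.val_succ, Fin.coe_castSucc]
      omega
    calc gval F (idx_le i.succ ((i.succ : ℕ) - ((t : ℕ) + 1))) 0
        = gval F ((idx_le i.castSucc ((i.castSucc : ℕ) - (t : ℕ))).trans hcs) 0 :=
          gval_congr F e _ _ 0
      _ = gval F hcs (gval F (idx_le i.castSucc ((i.castSucc : ℕ) - (t : ℕ))) 0) :=
          gval_trans F _ hcs 0
  · rw [aval_of_gt F i.succ (show ¬ ((t : ℕ) + 1 ≤ (i.succ : ℕ)) by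
      simp only [Fin.val_succ]; omega),
      aval_of_gt F i.castSucc (show ¬ ((t : ℕ) ≤ (i.castSucc : ℕ)) by
      simp only [Fin.coe_castSucc]; omega)]
    have e : idx i.succ ((t : ℕ) + 1 - ((i.succ : ℕ) + 1))
        = idx i.castSucc ((t : ℕ) - ((i.castSucc : ℕ) + 1)) := by
      apply Fin.ext
      simp only [idx, Fin.val_succ, Fin.coe_castSucc]
      omega
    calc gval F (idx_le i.succ ((t : ℕ) + 1 - ((i.succ : ℕ) + 1)))
          (chainObj F (idx i.succ ((t : ℕ) + 1 - ((i.succ : ℕ) + 1))))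
        = gval F ((idx_le i.castSucc ((t : ℕ) - ((i.castSucc : ℕ) + 1))).trans hcs)
          (chainObj F (idx i.castSucc ((t : ℕ) - ((i.castSucc : ℕ) + 1)))) :=
          gval_congr' F e _ _
      _ = gval F hcs (gval F (idx_le i.castSucc ((t : ℕ) - ((i.castSucc : ℕ) + 1)))
          (chainObj F (idx i.castSucc ((t : ℕ) - ((i.castSucc : ℕ) + 1))))) :=
          gval_trans F _ hcs _

lemma gTo_whisker {m : ℕ} (Φ : Fin (m + 1) ⥤ Fin (k + 1))
    (F : ComposableArrows (El X) k) {j j' : Fin (m + 1)} (h : j ≤ j')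
    (e : Φ.obj j ≤ Φ.obj j') :
    gTo (F.whiskerLeft Φ) h = gTo F e := by
  unfold gTo
  show (F.map (Φ.map (homOfLE h))).1 = (F.map (homOfLE e)).1
  rw [Subsingleton.elim (Φ.map (homOfLE h)) (homOfLE e)]

lemma gval_whisker {m : ℕ} (Φ : Fin (m + 1) ⥤ Fin (k + 1))
    (F : ComposableArrows (El X) k) {j j' : Fin (m + 1)} (h : j ≤ j')
    (e : Φ.obj j ≤ Φ.obj j') (t : ℕ) :
    gval (F.whiskerLeft Φ) h t = gval F e t := by
  unfold gval
  rw [gTo_whisker Φ F h e]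
  rfl

lemma amap_reindex {m : ℕ} (γ : SimplexCategory.mk m ⟶ SimplexCategory.mk k)
    (F : ComposableArrows (El X) k) :
    Q.map γ ≫ amap F (Fin.last k)
      = amap (F.whiskerLeft (SimplexCategory.toCat.map γ).toFunctor) (Fin.last m)
        ≫ gTo F (Fin.le_last (γ.toOrderHom (Fin.last m))) := by
  set W := F.whiskerLeft (SimplexCategory.toCat.map γ).toFunctor with hW
  set g0 := γ.toOrderHom with hg0
  have hlast : γ.toOrderHom (Fin.last m) ≤ Fin.last k := Fin.le_last _
  apply SimplexCategory.Hom.ext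
  apply OrderHom.ext
  funext t
  apply Fin.ext
  have ht : (t : ℕ) < 2 * m + 2 := t.isLt
  show ((amap F (Fin.last k)).toOrderHom ((Q.map γ).toOrderHom t) : ℕ)
    = ((gTo F hlast).toOrderHom ((amap W (Fin.last m)).toOrderHom t) : ℕ)
  have hR : ((gTo F hlast).toOrderHom ((amap W (Fin.last m)).toOrderHom t) : ℕ)
      = gval F hlast (aval W (Fin.last m) (t : ℕ)) :=
    (natApp_of_le (gTo F hlast).toOrderHom (aval_le W (Fin.last m) (t : ℕ))).symm
  rw [hR]
  by_cases h : (t : ℕ) ≤ m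
  · -- first half
    have hv : natApp g0 (m - (t : ℕ)) ≤ k := natApp_le g0 _
    have hq : (((Q.map γ).toOrderHom t : Fin (2 * k + 2)) : ℕ)
        = k - natApp g0 (m - (t : ℕ)) := by
      show (Qfun g0 t : ℕ) = _
      rw [Qfun_val_le g0 t h]
    have hL : ((amap F (Fin.last k)).toOrderHom ((Q.map γ).toOrderHom t) : ℕ)
        = aval F (Fin.last k) (k - natApp g0 (m - (t : ℕ))) := by
      refine (amap_val F (Fin.last k) _).trans ?_
      exact congrArg (aval F (Fin.last k)) hq
    rw [hL, aval_of_le F (Fin.last k) (by simp only [Fin.val_last]; omega),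
      aval_of_le W (Fin.last m) (by simp only [Fin.val_last]; omega)]
    rw [gval_whisker (SimplexCategory.toCat.map γ).toFunctor F
      (idx_le (Fin.last m) ((Fin.last m : ℕ) - (t : ℕ)))
      (g0.monotone (idx_le (Fin.last m) ((Fin.last m : ℕ) - (t : ℕ)))) 0]
    have e1 : (g0 (idx (Fin.last m) ((Fin.last m : ℕ) - (t : ℕ))) : ℕ)
        = natApp g0 (m - (t : ℕ)) := rfl
    have e : idx (Fin.last k) ((Fin.last k : ℕ) - (k - natApp g0 (m - (t : ℕ))))
        = g0 (idx (Fin.last m) ((Fin.last m : ℕ) - (t : ℕ))) := by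
      apply Fin.ext
      rw [e1]
      simp only [idx, Fin.val_last]
      omega
    calc gval F (idx_le (Fin.last k) ((Fin.last k : ℕ) - (k - natApp g0 (m - (t : ℕ))))) 0
        = gval F ((g0.monotone (idx_le (Fin.last m) ((Fin.last m : ℕ) - (t : ℕ)))).trans
            hlast) 0 := gval_congr F e _ _ 0
      _ = gval F hlast
            (gval F (g0.monotone (idx_le (Fin.last m) ((Fin.last m : ℕ) - (t : ℕ)))) 0) :=
          gval_trans F _ hlast 0
  · -- second half
    have hv : natApp g0 ((t : ℕ) - (m + 1)) ≤ k := natApp_le g0 _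
    have hq : (((Q.map γ).toOrderHom t : Fin (2 * k + 2)) : ℕ)
        = k + 1 + natApp g0 ((t : ℕ) - (m + 1)) := by
      show (Qfun g0 t : ℕ) = _
      rw [Qfun_val_gt g0 t h]
    have hL : ((amap F (Fin.last k)).toOrderHom ((Q.map γ).toOrderHom t) : ℕ)
        = aval F (Fin.last k) (k + 1 + natApp g0 ((t : ℕ) - (m + 1))) := by
      refine (amap_val F (Fin.last k) _).trans ?_
      exact congrArg (aval F (Fin.last k)) hq
    rw [hL, aval_of_gt F (Fin.last k) (by simp only [Fin.val_last]; omega),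
      aval_of_gt W (Fin.last m) (by simp only [Fin.val_last]; omega)]
    rw [gval_whisker (SimplexCategory.toCat.map γ).toFunctor F
      (idx_le (Fin.last m) ((t : ℕ) - ((Fin.last m : ℕ) + 1)))
      (g0.monotone (idx_le (Fin.last m) ((t : ℕ) - ((Fin.last m : ℕ) + 1))))]
    have e1 : (g0 (idx (Fin.last m) ((t : ℕ) - ((Fin.last m : ℕ) + 1))) : ℕ)
        = natApp g0 ((t : ℕ) - (m + 1)) := rfl
    have e : idx (Fin.last k)
          (k + 1 + natApp g0 ((t : ℕ) - (m + 1)) - ((Fin.last k : ℕ) + 1))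
        = g0 (idx (Fin.last m) ((t : ℕ) - ((Fin.last m : ℕ) + 1))) := by
      apply Fin.ext
      rw [e1]
      simp only [idx, Fin.val_last]
      omega
    have ec : chainObj W (idx (Fin.last m) ((t : ℕ) - ((Fin.last m : ℕ) + 1)))
        = chainObj F (g0 (idx (Fin.last m) ((t : ℕ) - ((Fin.last m : ℕ) + 1)))) := rfl
    rw [ec]
    calc gval F (idx_le (Fin.last k)
            (k + 1 + natApp g0 ((t : ℕ) - (m + 1)) - ((Fin.last k : ℕ) + 1)))
          (chainObj F (idx (Fin.last k)
            (k + 1 + natApp g0 ((t : ℕ) - (m + 1)) - ((Fin.last k : ℕ) + 1))))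
        = gval F ((g0.monotone (idx_le (Fin.last m) ((t : ℕ) - ((Fin.last m : ℕ) + 1)))).trans
              hlast)
            (chainObj F (g0 (idx (Fin.last m) ((t : ℕ) - ((Fin.last m : ℕ) + 1))))) :=
          gval_congr' F e _ _
      _ = gval F hlast
            (gval F (g0.monotone (idx_le (Fin.last m) ((t : ℕ) - ((Fin.last m : ℕ) + 1))))
              (chainObj F (g0 (idx (Fin.last m) ((t : ℕ) - ((Fin.last m : ℕ) + 1)))))) :=
          gval_trans F _ hlast _

end Lambda

/-- The value of `Λ_X` on a simplex of the nerve of the category of elements. -/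
def lamApp (X : SSet.{0}) (Δ : SimplexCategoryᵒᵖ) (F : ComposableArrows (El X) Δ.unop.len) :
    X.obj (op (Q.obj Δ.unop)) :=
  X.map (amap F (Fin.last Δ.unop.len)).op (F.obj (Fin.last Δ.unop.len)).σ

lemma lamApp_natural' (X : SSet.{0}) {m k : ℕ}
    (γ : SimplexCategory.mk m ⟶ SimplexCategory.mk k) (F : ComposableArrows (El X) k) :
    lamApp X (op (SimplexCategory.mk m)) ((nerve (El X)).map γ.op F)
      = X.map (Q.map γ).op (lamApp X (op (SimplexCategory.mk k)) F) := by
  calc lamApp X (op (SimplexCategory.mk m)) ((nerve (El X)).map γ.op F)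
      = X.map (amap (F.whiskerLeft (SimplexCategory.toCat.map γ).toFunctor) (Fin.last m)).op
          ((F.obj (γ.toOrderHom (Fin.last m))).σ) := rfl
    _ = X.map (amap (F.whiskerLeft (SimplexCategory.toCat.map γ).toFunctor) (Fin.last m)).op
          (X.map (gTo F (Fin.le_last (γ.toOrderHom (Fin.last m)))).op
            ((F.obj (Fin.last k)).σ)) := by
        exact congrArg _ ((F.map (homOfLE (Fin.le_last (γ.toOrderHom (Fin.last m))))).2).symm
    _ = X.map (Q.map γ ≫ amap F (Fin.last k)).op ((F.obj (Fin.last k)).σ) := by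
        exact (FunctorToTypes.map_comp_apply X _ _ _).symm.trans
          (congrArg (fun g : Q.obj (SimplexCategory.mk m) ⟶ SimplexCategory.mk (chainObj F (Fin.last k)) =>
            X.map g.op ((F.obj (Fin.last k)).σ)) (amap_reindex γ F).symm)
    _ = X.map (Q.map γ).op (X.map (amap F (Fin.last k)).op ((F.obj (Fin.last k)).σ)) := by
        rw [op_comp]
        exact FunctorToTypes.map_comp_apply X _ _ _
    _ = X.map (Q.map γ).op (lamApp X (op (SimplexCategory.mk k)) F) := rfl

/-- The simplicial map `Λ_X : N(el X) ⟶ sd X`. -/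
def lam (X : SSet.{0}) : nerve (El X) ⟶ sdF.obj X where
  app Δ := TypeCat.ofHom (fun F => lamApp X Δ F)
  naturality Δ1 Δ2 f := by
    ext F
    exact lamApp_natural' X (m := Δ2.unop.len) (k := Δ1.unop.len) f.unop F

lemma amap_elMap {X Y : SSet.{0}} (f : X ⟶ Y) {k : ℕ} (F : ComposableArrows (El X) k)
    (i : Fin (k + 1)) :
    amap ((elMap f).mapComposableArrows k |>.obj F) i = amap F i := rfl

lemma lam_naturalX {X Y : SSet.{0}} (f : X ⟶ Y) :
    lam X ≫ sdF.map f
      = nerveFunctor.map (X := Cat.of (El X)) (Y := Cat.of (El Y)) (elMap f).toCatHom ≫ lam Y := by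
  apply NatTrans.ext
  ext Δ F
  show (sdF.map f).app Δ (lamApp X Δ F)
    = lamApp Y Δ ((nerveFunctor.map (X := Cat.of (El X)) (Y := Cat.of (El Y))
        (elMap f).toCatHom).app Δ F)
  exact NatTrans.naturality_apply f (amap F (Fin.last Δ.unop.len)).op
    ((F.obj (Fin.last Δ.unop.len)).σ)

lemma amap_zero {X : SSet.{0}} (F : ComposableArrows (El X) 0) :
    amap F (Fin.last 0) = act1 (F.obj 0).n := by
  apply SimplexCategory.Hom.ext
  apply OrderHom.ext
  funext t
  apply Fin.ext
  have ht : (t : ℕ) < 2 := t.isLt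
  show aval F (Fin.last 0) (t : ℕ)
    = (((act1 (F.obj 0).n).toOrderHom t : Fin ((F.obj 0).n + 1)) : ℕ)
  have hval : (act1 (F.obj 0).n).toOrderHom t
      = if (t : ℕ) = 0 then (⟨0, Nat.succ_pos _⟩ : Fin ((F.obj 0).n + 1))
        else Fin.last (F.obj 0).n := rfl
  have hact : (((act1 (F.obj 0).n).toOrderHom t : Fin ((F.obj 0).n + 1)) : ℕ)
      = if (t : ℕ) = 0 then 0 else (F.obj 0).n := by
    rw [hval]
    split <;> simp
  rw [hact]
  by_cases h : (t : ℕ) = 0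
  · rw [h, if_pos rfl]
    exact aval_zero F (Fin.last 0)
  · rw [if_neg h]
    have h1 : (t : ℕ) = 1 := by omega
    rw [h1]
    exact aval_top F (Fin.last 0)

lemma lam_zero (X : SSet.{0}) (F : ComposableArrows (El X) 0) :
    (lam X).app (op (SimplexCategory.mk 0)) F
      = X.map (act1 (F.obj 0).n).op (F.obj 0).σ := by
  show X.map (amap F (Fin.last 0)).op ((F.obj (Fin.last 0)).σ)
    = X.map (act1 (F.obj 0).n).op (F.obj 0).σ
  rw [amap_zero F]
  rfl
theorem statement11 :
    ∃ Λ : ∀ X : SSet.{0}, nerve (El X) ⟶ sdF.obj X,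
      IsLambda Λ ∧
      (∀ {X Y : SSet.{0}} (f : X ⟶ Y),
        Λ X ≫ sdF.map f
          = nerveFunctor.map (X := Cat.of (El X)) (Y := Cat.of (El Y)) (elMap f).toCatHom ≫ Λ Y) ∧
      (∀ (X : SSet.{0}) (F : ComposableArrows (El X) 0),
        (Λ X).app (op (SimplexCategory.mk 0)) F
          = X.map (act1 (F.obj 0).n).op (F.obj 0).σ) := by
  refine ⟨lam, ?_, ?_, ?_⟩
  · intro X k F
    exact ⟨amap F, ⟨fun i => amap_active F i, fun i => amap_ladder F i⟩, rfl⟩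
  · intro X Y f
    exact lam_naturalX f
  · intro X F
    exact lam_zero X F

end DecompPaper
end

section
/- Let D be a decomposition space and p : F → tw(D) a discrete fibration, and let λ_D^*(F) → el(D) be the pullback of p along λ_D : el(D) → tw(D) (a discrete fibration over el(D)). Then the simplicial map Y → D over D corresponding to this discrete fibration under the equivalence between discrete fibrations over el(D) and simplicial maps into D is CULF; in particular, Y is a decomposition space. -/
open CategoryTheory CategoryTheory.Limits Opposite Simplicial

namespace DecompPaper

/-! ### Auxiliary lemmas -/

section Aux

lemma isPullback_types {P X Y Z : Type} {fst : P ⟶ X} {snd : P ⟶ Y} {f : X ⟶ Z} {g : Y ⟶ Z}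
    (comm : ∀ p, f (fst p) = g (snd p))
    (uniq : ∀ p p' : P, fst p = fst p' → snd p = snd p' → p = p')
    (ex : ∀ x y, f x = g y → ∃ p, fst p = x ∧ snd p = y) :
    IsPullback fst snd f g := by
  have w : fst ≫ f = snd ≫ g := by ext p; exact comm p
  refine IsPullback.of_isLimit (PullbackCone.IsLimit.mk w
    (fun s => TypeCat.ofHom (fun t => (ex (s.fst t) (s.snd t) (ConcreteCategory.congr_hom s.condition t)).choose)) ?_ ?_ ?_)
  · intro s; ext t
    exact ((ex (s.fst t) (s.snd t) (ConcreteCategory.congr_hom s.condition t)).choose_spec).1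
  · intro s; ext t
    exact ((ex (s.fst t) (s.snd t) (ConcreteCategory.congr_hom s.condition t)).choose_spec).2
  · intro s m h1 h2; ext t
    exact uniq _ _
      ((ConcreteCategory.congr_hom h1 t).trans (((ex (s.fst t) (s.snd t) (ConcreteCategory.congr_hom s.condition t)).choose_spec).1).symm)
      ((ConcreteCategory.congr_hom h2 t).trans (((ex (s.fst t) (s.snd t) (ConcreteCategory.congr_hom s.condition t)).choose_spec).2).symm)

/-- The monotone map `[N] → [N+1]` sending `i` to `i+1` for `i ≥ t` and to `i` otherwise. -/
def skipGE (N : ℕ) (t : ℕ) : SimplexCategory.mk N ⟶ SimplexCategory.mk (N + 1) :=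
  SimplexCategory.Hom.mk
    ⟨fun i => ⟨if t ≤ (i : ℕ) then (i : ℕ) + 1 else (i : ℕ), by
        have := i.isLt; simp only [SimplexCategory.len_mk] at this ⊢; split <;> omega⟩, by
      intro i j hij
      have := Fin.le_def.mp hij
      simp only [Fin.mk_le_mk]
      split <;> split <;> omega⟩

/-- The monotone map `[N] → [N+1]` sending `i` to `i+1` for `i > t` and to `i` otherwise. -/
def skipGT (N : ℕ) (t : ℕ) : SimplexCategory.mk N ⟶ SimplexCategory.mk (N + 1) :=
  SimplexCategory.Hom.mk
    ⟨fun i => ⟨if t < (i : ℕ) then (i : ℕ) + 1 else (i : ℕ), by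
        have := i.isLt; simp only [SimplexCategory.len_mk] at this ⊢; split <;> omega⟩, by
      intro i j hij
      have := Fin.le_def.mp hij
      simp only [Fin.mk_le_mk]
      split <;> split <;> omega⟩

lemma skipGE_val (N t : ℕ) (i : Fin (N + 1)) :
    (((skipGE N t).toOrderHom i : Fin (N + 2)) : ℕ) = if t ≤ (i : ℕ) then (i : ℕ) + 1 else (i : ℕ) :=
  rfl

lemma skipGT_val (N t : ℕ) (i : Fin (N + 1)) :
    (((skipGT N t).toOrderHom i : Fin (N + 2)) : ℕ) = if t < (i : ℕ) then (i : ℕ) + 1 else (i : ℕ) :=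
  rfl

/-- Joint surjectivity of the legs of a pushout square in `Δ`. -/
lemma pushout_jointly_surj {a b c d : SimplexCategory} {f : a ⟶ b} {g : a ⟶ c} {h : b ⟶ d}
    {k : c ⟶ d} (hpo : IsPushout f g h k) (t : Fin (d.len + 1)) :
    (∃ j, h.toOrderHom j = t) ∨ (∃ j, k.toOrderHom j = t) := by
  by_contra hc
  push_neg at hc
  obtain ⟨hc1, hc2⟩ := hc
  have key : ∀ (e : SimplexCategory) (u : e ⟶ d), (∀ j, u.toOrderHom j ≠ t) →
      u ≫ (skipGE d.len (t : ℕ)) = u ≫ (skipGT d.len (t : ℕ)) := by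
    intro e u hu
    apply SimplexCategory.Hom.ext
    apply OrderHom.ext
    funext j
    apply Fin.ext
    have hne : ((u.toOrderHom j : Fin (d.len + 1)) : ℕ) ≠ (t : ℕ) := fun hh => hu j (Fin.ext hh)
    show (((skipGE d.len (t : ℕ)).toOrderHom (u.toOrderHom j) : Fin (d.len + 2)) : ℕ)
        = (((skipGT d.len (t : ℕ)).toOrderHom (u.toOrderHom j) : Fin (d.len + 2)) : ℕ)
    rw [skipGE_val, skipGT_val]
    split <;> split <;> omega
  have hψ : (skipGE d.len (t : ℕ) : d ⟶ SimplexCategory.mk (d.len + 1))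
      = skipGT d.len (t : ℕ) := hpo.hom_ext (key b h hc1) (key c k hc2)
  have := congrArg (fun w : SimplexCategory.mk d.len ⟶ SimplexCategory.mk (d.len + 1) =>
    ((SimplexCategory.Hom.toOrderHom w) t : ℕ)) hψ
  simp only at this
  rw [skipGE_val, skipGT_val] at this
  simp at this

/-- In a pushout of an active map `f` along any map, the map `k` opposite `f` is active. -/
lemma pushout_active {a b c d : SimplexCategory} {f : a ⟶ b} {g : a ⟶ c} {h : b ⟶ d}
    {k : c ⟶ d} (hpo : IsPushout f g h k) (hf : IsActive f) : IsActive k := by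
  have hw : ∀ x, h.toOrderHom (f.toOrderHom x) = k.toOrderHom (g.toOrderHom x) := by
    intro x
    exact congrArg (fun w => (SimplexCategory.Hom.toOrderHom w) x) hpo.w
  constructor
  · rcases pushout_jointly_surj hpo 0 with ⟨j, hj⟩ | ⟨j, hj⟩
    · have h0 : h.toOrderHom 0 = 0 :=
        le_antisymm (hj ▸ h.toOrderHom.monotone (Fin.zero_le j)) (Fin.zero_le _)
      have : k.toOrderHom (g.toOrderHom 0) = 0 := by
        rw [← hw 0, hf.1, h0]
      exact le_antisymm (this ▸ k.toOrderHom.monotone (Fin.zero_le _)) (Fin.zero_le _)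
    · have : k.toOrderHom 0 ≤ 0 := hj ▸ k.toOrderHom.monotone (Fin.zero_le j)
      exact le_antisymm this (Fin.zero_le _)
  · rcases pushout_jointly_surj hpo (Fin.last d.len) with ⟨j, hj⟩ | ⟨j, hj⟩
    · have hlast : h.toOrderHom (Fin.last b.len) = Fin.last d.len :=
        le_antisymm (Fin.le_last _) (hj ▸ h.toOrderHom.monotone (Fin.le_last j))
      have : k.toOrderHom (g.toOrderHom (Fin.last a.len)) = Fin.last d.len := by
        rw [← hw _, hf.2, hlast]
      exact le_antisymm (Fin.le_last _)
        (this ▸ k.toOrderHom.monotone (Fin.le_last _))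
    · exact le_antisymm (Fin.le_last _) (hj ▸ k.toOrderHom.monotone (Fin.le_last j))

/-- A CULF map into a decomposition space has decomposition-space domain. -/
lemma isDecomp_of_isCULF {Y D : SSet.{0}} {G : Y ⟶ D} (hG : IsCULF G) (hD : IsDecomp D) :
    IsDecomp Y := by
  intro a b c d f g h k hf hgi hpo
  have hk : IsActive k := pushout_active hpo hf
  have Ck := hG k hk
  have Cf := hG f hf
  have SD := hD f g h k hf hgi hpo
  have V := Ck.paste_vert SD.flip
  rw [show G.app (op d) ≫ D.map h.op = Y.map h.op ≫ G.app (op b) from (G.naturality h.op).symm,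
      show G.app (op c) ≫ D.map g.op = Y.map g.op ≫ G.app (op a) from
        (G.naturality g.op).symm] at V
  refine (IsPullback.of_bot V ?_ Cf).flip
  rw [← Y.map_comp, ← Y.map_comp, ← op_comp, ← op_comp, ← hpo.w]

end Aux
section LambdaActive

lemma comp_toOrderHom_apply {x y z : SimplexCategory} (u : x ⟶ y) (v : y ⟶ z)
    (i : Fin (x.len + 1)) : (u ≫ v).toOrderHom i = v.toOrderHom (u.toOrderHom i) := rfl

lemma active_unique_one {n : ℕ} (f : SimplexCategory.mk 1 ⟶ SimplexCategory.mk n)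
    (hf : IsActive f) : f = act1 n := by
  apply SimplexCategory.Hom.ext
  apply OrderHom.ext
  funext i
  match i with
  | 0 => exact hf.1
  | 1 => exact hf.2

lemma hom_ext4 {n : ℕ} (f g : SimplexCategory.mk 3 ⟶ SimplexCategory.mk n)
    (h0 : f.toOrderHom (0 : Fin 4) = g.toOrderHom (0 : Fin 4))
    (h1 : f.toOrderHom (1 : Fin 4) = g.toOrderHom (1 : Fin 4))
    (h2 : f.toOrderHom (2 : Fin 4) = g.toOrderHom (2 : Fin 4))
    (h3 : f.toOrderHom (3 : Fin 4) = g.toOrderHom (3 : Fin 4)) : f = g := by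
  apply SimplexCategory.Hom.ext
  apply OrderHom.ext
  funext i
  match i with
  | 0 => exact h0
  | 1 => exact h1
  | 2 => exact h2
  | 3 => exact h3

lemma el_comp_val {X : SSet.{0}} {e1 e2 e3 : El X} (f : e1 ⟶ e2) (g : e2 ⟶ e3) :
    (f ≫ g).1 = f.1 ≫ g.1 := rfl

lemma el_eqToHom_val {X : SSet.{0}} {e e' : El X} (h : e = e') :
    (eqToHom h).1 = eqToHom (congrArg (fun z : El X => SimplexCategory.mk z.n) h) := by
  subst h; rfl

lemma el_map_eqToHom {X : SSet.{0}} {e e' : El X} (h : e = e')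
    (q : SimplexCategory.mk e'.n = SimplexCategory.mk e.n) :
    X.map (eqToHom q).op e.σ = e'.σ := by
  subst h
  rw [show eqToHom q = 𝟙 (SimplexCategory.mk e.n) from rfl]
  simp

lemma isActive_conj {x y z w : SimplexCategory} (h1 : x = y) (h2 : z = w) (f : y ⟶ z)
    (hf : IsActive f) : IsActive (eqToHom h1 ≫ f ≫ eqToHom h2) := by
  subst h1; subst h2; simpa using hf

lemma strictPB_ext {A B C : Type} [SmallCategory A] [SmallCategory B] [SmallCategory C]
    {G : A ⥤ C} {p : B ⥤ C} {x y : StrictPB G p} (h1 : x.pt = y.pt) (h2 : x.fib = y.fib) :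
    x = y := by
  cases x; cases y; cases h1; cases h2; rfl

lemma el_mk_inj {X : SSet.{0}} {n : ℕ} {σ τ : X.obj (op (SimplexCategory.mk n))}
    (h : (⟨n, σ⟩ : El X) = ⟨n, τ⟩) : σ = τ := by
  injection h

variable {D : SSet.{0}}

/-- The fundamental property: `λ_D` sends morphisms of `el(D)` lying over active maps to
identities. -/
lemma lamD_map_active
    (Λ : ∀ X : SSet.{0}, nerve (El X) ⟶ sdF.obj X) (hΛ : IsLambda Λ)
    {TD : Type} [SmallCategory TD] (eD : nerve TD ≅ sdF.obj D) (lamD : El D ⥤ TD)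
    (hlam : nerveFunctor.map (X := Cat.of (El D)) (Y := Cat.of TD) lamD.toCatHom ≫ eD.hom = Λ D)
    {e e' : El D} (φ : e ⟶ e') (hφ : IsActive φ.1) :
    ∃ h : lamD.obj e = lamD.obj e', lamD.map φ = eqToHom h := by
  have happ : ∀ (k : ℕ) (F : ComposableArrows (El D) k),
      eD.hom.app (op (SimplexCategory.mk k)) (F ⋙ lamD)
        = (Λ D).app (op (SimplexCategory.mk k)) F := fun k F => by
    have := ConcreteCategory.congr_hom (congrArg (fun τ : nerve (El D) ⟶ sdF.obj D =>
      τ.app (op (SimplexCategory.mk k))) hlam) F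
    exact this
  have key0 : ∀ e₀ : El D,
      eD.hom.app (op (SimplexCategory.mk 0)) (ComposableArrows.mk₀ e₀ ⋙ lamD)
        = D.map (act1 e₀.n).op e₀.σ := by
    intro e₀
    obtain ⟨α, ⟨hact, _⟩, hval⟩ := hΛ D 0 (ComposableArrows.mk₀ e₀)
    have hA : (α (Fin.last 0) : SimplexCategory.mk 1 ⟶ SimplexCategory.mk e₀.n)
        = act1 e₀.n := active_unique_one _ (hact _)
    rw [happ 0, hval, hA]
    rfl
  obtain ⟨α, ⟨hact, hlad⟩, hval⟩ := hΛ D 1 (ComposableArrows.mk₁ φ)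
  have hcm : chainMap (ComposableArrows.mk₁ φ) 0 = φ.1 := by
    have h : (ComposableArrows.mk₁ φ).map (homOfLE (Fin.castSucc_lt_succ (i := (0 : Fin 1))).le) = φ := by
      simp [ComposableArrows.mk₁_map, ComposableArrows.Mk₁.map]
      rfl
    exact congrArg Subtype.val h
  have hA0 : (α ((0 : Fin 1).castSucc) : SimplexCategory.mk 1 ⟶ SimplexCategory.mk e.n)
      = act1 e.n := active_unique_one _ (hact _)
  have hL : Q.map (SimplexCategory.δ (Fin.last 1))
        ≫ (α (Fin.last 1) : SimplexCategory.mk 3 ⟶ SimplexCategory.mk e'.n)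
      = (act1 e.n) ≫ φ.1 := by
    have h := hlad 0
    rw [hcm, hA0] at h
    exact h
  -- values of `α 1`
  have hv0 : (α (Fin.last 1)).toOrderHom (0 : Fin 4) = 0 := (hact (Fin.last 1)).1
  have hv3 : (α (Fin.last 1)).toOrderHom (3 : Fin 4) = Fin.last e'.n := (hact (Fin.last 1)).2
  have hv1 : (α (Fin.last 1)).toOrderHom
        ((Q.map (SimplexCategory.δ (Fin.last 1))).toOrderHom (0 : Fin 2))
      = φ.1.toOrderHom ((act1 e.n).toOrderHom (0 : Fin 2)) :=
    congrArg (fun w : SimplexCategory.mk 1 ⟶ SimplexCategory.mk e'.n =>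
      w.toOrderHom (0 : Fin 2)) hL
  have hv2 : (α (Fin.last 1)).toOrderHom
        ((Q.map (SimplexCategory.δ (Fin.last 1))).toOrderHom (1 : Fin 2))
      = φ.1.toOrderHom ((act1 e.n).toOrderHom (1 : Fin 2)) :=
    congrArg (fun w : SimplexCategory.mk 1 ⟶ SimplexCategory.mk e'.n =>
      w.toOrderHom (1 : Fin 2)) hL
  rw [show (Q.map (SimplexCategory.δ (Fin.last 1))).toOrderHom (0 : Fin 2) = (1 : Fin 4) from
        rfl,
      show (act1 e.n).toOrderHom (0 : Fin 2) = 0 from rfl, hφ.1] at hv1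
  rw [show (Q.map (SimplexCategory.δ (Fin.last 1))).toOrderHom (1 : Fin 2) = (2 : Fin 4) from
        rfl,
      show (act1 e.n).toOrderHom (1 : Fin 2) = Fin.last (SimplexCategory.mk e.n).len from rfl, hφ.2] at hv2
  have r0 : (Q.map (SimplexCategory.σ (0 : Fin 1)) ≫ act1 e'.n).toOrderHom (0 : Fin 4) = 0 := by
    rfl
  have r1 : (Q.map (SimplexCategory.σ (0 : Fin 1)) ≫ act1 e'.n).toOrderHom (1 : Fin 4) = 0 := by
    rfl
  have r2 : (Q.map (SimplexCategory.σ (0 : Fin 1)) ≫ act1 e'.n).toOrderHom (2 : Fin 4)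
      = Fin.last e'.n := by
    rfl
  have r3 : (Q.map (SimplexCategory.σ (0 : Fin 1)) ≫ act1 e'.n).toOrderHom (3 : Fin 4)
      = Fin.last e'.n := by
    rfl
  have ha1 : (α (Fin.last 1) : SimplexCategory.mk 3 ⟶ SimplexCategory.mk e'.n)
      = Q.map (SimplexCategory.σ (0 : Fin 1)) ≫ act1 e'.n :=
    hom_ext4 _ _ (hv0.trans r0.symm) (hv1.trans r1.symm) (hv2.trans r2.symm) (hv3.trans r3.symm)
  have hΛ1 : (Λ D).app (op (SimplexCategory.mk 1)) (ComposableArrows.mk₁ φ)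
      = (sdF.obj D).map (SimplexCategory.σ (0 : Fin 1)).op (D.map (act1 e'.n).op e'.σ) := by
    rw [hval, ha1]
    exact FunctorToTypes.map_comp_apply D (act1 e'.n).op (Q.map (SimplexCategory.σ (0 : Fin 1))).op e'.σ
  have hnat : eD.hom.app (op (SimplexCategory.mk 1))
        ((nerve TD).map (SimplexCategory.σ (0 : Fin 1)).op (ComposableArrows.mk₀ e' ⋙ lamD))
      = (sdF.obj D).map (SimplexCategory.σ (0 : Fin 1)).op
        (eD.hom.app (op (SimplexCategory.mk 0)) (ComposableArrows.mk₀ e' ⋙ lamD)) :=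
    ConcreteCategory.congr_hom (eD.hom.naturality (SimplexCategory.σ (0 : Fin 1)).op) _
  have step : eD.hom.app (op (SimplexCategory.mk 1)) (ComposableArrows.mk₁ φ ⋙ lamD)
      = eD.hom.app (op (SimplexCategory.mk 1))
        ((nerve TD).map (SimplexCategory.σ (0 : Fin 1)).op (ComposableArrows.mk₀ e' ⋙ lamD)) := by
    rw [happ 1, hΛ1, hnat, key0 e']
  have hinj : Function.Injective (eD.hom.app (op (SimplexCategory.mk 1))) := by
    intro x y hxy
    have hx := ConcreteCategory.congr_hom (congrArg (fun τ : nerve TD ⟶ nerve TD =>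
      τ.app (op (SimplexCategory.mk 1))) eD.hom_inv_id) x
    have hy := ConcreteCategory.congr_hom (congrArg (fun τ : nerve TD ⟶ nerve TD =>
      τ.app (op (SimplexCategory.mk 1))) eD.hom_inv_id) y
    calc x = eD.inv.app _ (eD.hom.app _ x) := hx.symm
    _ = eD.inv.app _ (eD.hom.app _ y) := by rw [hxy]
    _ = y := hy
  have hEq : ComposableArrows.mk₁ φ ⋙ lamD
      = (nerve TD).map (SimplexCategory.σ (0 : Fin 1)).op (ComposableArrows.mk₀ e' ⋙ lamD) :=
    hinj step
  have hobj : lamD.obj e = lamD.obj e' := Functor.congr_obj hEq 0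
  refine ⟨hobj, ?_⟩
  have hFu : (ComposableArrows.mk₁ φ).map (homOfLE (Fin.castSucc_lt_succ (i := (0 : Fin 1))).le) = φ := by
    simp [ComposableArrows.mk₁_map, ComposableArrows.Mk₁.map]
    rfl
  have hmap := Functor.congr_hom hEq (homOfLE (Fin.castSucc_lt_succ (i := (0 : Fin 1))).le)
  have hR : ((nerve TD).map (SimplexCategory.σ (0 : Fin 1)).op
        (ComposableArrows.mk₀ e' ⋙ lamD)).map (homOfLE (Fin.castSucc_lt_succ (i := (0 : Fin 1))).le)
      = 𝟙 (lamD.obj e') := lamD.map_id e'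
  rw [hR] at hmap
  have h' := (congrArg (fun ψ => lamD.map ψ) hFu).symm.trans hmap
  exact h'.trans (by erw [Category.id_comp, eqToHom_trans]; rfl)

end LambdaActive

theorem statement17_aux {D : SSet.{0}} (hD : IsDecomp D)
    (Λ : ∀ X : SSet.{0}, nerve (El X) ⟶ sdF.obj X) (hΛ : IsLambda Λ)
    (TD : Type) [SmallCategory TD] (eD : nerve TD ≅ sdF.obj D)
    (lamD : El D ⥤ TD)
    (hlam : nerveFunctor.map (X := Cat.of (El D)) (Y := Cat.of TD) lamD.toCatHom ≫ eD.hom = Λ D)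
    (F : Type) [SmallCategory F] (p : F ⥤ TD) (hp : IsDiscreteFibration p)
    (Y : SSet.{0}) (G : Y ⟶ D)
    (Ψh : El Y ⥤ StrictPB lamD p) (Ψi : StrictPB lamD p ⥤ El Y)
    (hhi : Ψh ⋙ Ψi = 𝟭 _) (hih : Ψi ⋙ Ψh = 𝟭 _)
    (hΨ : Ψh ⋙ pbProj lamD p = elMap G) :
    IsCULF G ∧ IsDecomp Y := by
  have hculf : IsCULF G := by
    intro a b g hg
    apply isPullback_types
    · intro yb
      exact ConcreteCategory.congr_hom (G.naturality g.op) yb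
    · -- uniqueness
      intro yb₁ yb₂ h1 h2
      let ea : El Y := ⟨a.len, Y.map g.op yb₁⟩
      have keyfib : ∀ (yb : Y.obj (op b)) (hyb : Y.map g.op yb = Y.map g.op yb₁),
          (Ψh.obj ea).fib = (Ψh.obj (⟨b.len, yb⟩ : El Y)).fib := by
        intro yb hyb
        let eb : El Y := ⟨b.len, yb⟩
        let ψ : ea ⟶ eb := ⟨g, hyb⟩
        let χ := Ψh.map ψ
        have hu : χ.1.1 = eqToHom (Functor.congr_obj hΨ ea) ≫ (elMap G).map ψ
            ≫ eqToHom (Functor.congr_obj hΨ eb).symm := Functor.congr_hom hΨ ψ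
        have hu1 : χ.1.1.1 = (eqToHom (Functor.congr_obj hΨ ea)).1 ≫ g
            ≫ (eqToHom (Functor.congr_obj hΨ eb).symm).1 := congrArg Subtype.val hu
        have hact : IsActive χ.1.1.1 := by
          rw [hu1, el_eqToHom_val, el_eqToHom_val]
          exact isActive_conj _ _ _ hg
        obtain ⟨ho, hm⟩ := lamD_map_active Λ hΛ eD lamD hlam χ.1.1 hact
        have E : p.obj (Ψh.obj ea).fib = p.obj (Ψh.obj eb).fib :=
          (Ψh.obj ea).eq.trans (ho.trans (Ψh.obj eb).eq.symm)
        have hpv : p.map χ.1.2 = eqToHom E := by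
          have hc := χ.2
          rw [hm] at hc
          simpa [eqToHom_trans] using hc
        obtain ⟨w, hw, huniq⟩ := hp (Ψh.obj eb).fib (p.obj (Ψh.obj ea).fib) (eqToHom E)
        have e1 : (⟨(Ψh.obj ea).fib, χ.1.2⟩ : Σ x : F, x ⟶ (Ψh.obj eb).fib) = w :=
          huniq _ ⟨rfl, by simp [hpv]⟩
        have e2 : (⟨(Ψh.obj eb).fib, 𝟙 _⟩ : Σ x : F, x ⟶ (Ψh.obj eb).fib) = w :=
          huniq _ ⟨E.symm, by simp⟩
        exact (congrArg Sigma.fst e1).trans (congrArg Sigma.fst e2).symm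
      have hfib : (Ψh.obj (⟨b.len, yb₁⟩ : El Y)).fib
          = (Ψh.obj (⟨b.len, yb₂⟩ : El Y)).fib :=
        (keyfib yb₁ rfl).symm.trans (keyfib yb₂ h1.symm)
      have hpt : (Ψh.obj (⟨b.len, yb₁⟩ : El Y)).pt
          = (Ψh.obj (⟨b.len, yb₂⟩ : El Y)).pt := by
        have t1 : (Ψh.obj (⟨b.len, yb₁⟩ : El Y)).pt
            = (elMap G).obj (⟨b.len, yb₁⟩ : El Y) := Functor.congr_obj hΨ _
        have t2 : (Ψh.obj (⟨b.len, yb₂⟩ : El Y)).pt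
            = (elMap G).obj (⟨b.len, yb₂⟩ : El Y) := Functor.congr_obj hΨ _
        rw [t1, t2]
        show (⟨b.len, G.app (op b) yb₁⟩ : El D) = ⟨b.len, G.app (op b) yb₂⟩
        rw [h2]
      have hPb : Ψh.obj (⟨b.len, yb₁⟩ : El Y) = Ψh.obj (⟨b.len, yb₂⟩ : El Y) :=
        strictPB_ext hpt hfib
      have heb : (⟨b.len, yb₁⟩ : El Y) = ⟨b.len, yb₂⟩ :=
        (Functor.congr_obj hhi (⟨b.len, yb₁⟩ : El Y)).symm.trans
          ((congrArg Ψi.obj hPb).trans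
            (Functor.congr_obj hhi (⟨b.len, yb₂⟩ : El Y)))
      exact el_mk_inj heb
    · -- existence
      intro y σ hc
      let ea : El Y := ⟨a.len, y⟩
      have hPa : (Ψh.obj ea).pt = (⟨a.len, D.map g.op σ⟩ : El D) :=
        (Functor.congr_obj hΨ ea).trans (congrArg (fun s => (⟨a.len, s⟩ : El D)) hc)
      let gel : (⟨a.len, D.map g.op σ⟩ : El D) ⟶ (⟨b.len, σ⟩ : El D) := ⟨g, rfl⟩
      obtain ⟨ho, hm⟩ := lamD_map_active Λ hΛ eD lamD hlam gel hg
      let Zb : StrictPB lamD p := ⟨⟨b.len, σ⟩, (Ψh.obj ea).fib,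
        (Ψh.obj ea).eq.trans ((congrArg lamD.obj hPa).trans ho)⟩
      let χ : Ψh.obj ea ⟶ Zb := ⟨(eqToHom hPa ≫ gel, 𝟙 _), by
        rw [lamD.map_comp, eqToHom_map lamD, hm]
        simp⟩
      let eb : El Y := Ψi.obj Zb
      have hr : Ψh.obj eb = Zb := Functor.congr_obj hih Zb
      have hEb : (elMap G).obj eb = (⟨b.len, σ⟩ : El D) :=
        (Functor.congr_obj hΨ eb).symm.trans (congrArg (pbProj lamD p).obj hr)
      have hnb : eb.n = b.len := congrArg El.n hEb
      have q' : SimplexCategory.mk b.len = SimplexCategory.mk eb.n := by rw [hnb]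
      let ψ : ea ⟶ eb := eqToHom (Functor.congr_obj hhi ea).symm ≫ Ψi.map χ
      have hψ1 : (elMap G).map ψ
          = eqToHom (Functor.congr_obj hΨ ea).symm ≫ (Ψh ⋙ pbProj lamD p).map ψ
            ≫ eqToHom (Functor.congr_obj hΨ eb) := by
        have := Functor.congr_hom hΨ ψ
        rw [this]
        simp
      have hψ2 : (Ψh ⋙ pbProj lamD p).map ψ
          = eqToHom (congrArg (pbProj lamD p).obj
                (congrArg Ψh.obj (Functor.congr_obj hhi ea).symm))
            ≫ eqToHom (congrArg (pbProj lamD p).obj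
                (Functor.congr_obj hih (Ψh.obj ea)))
            ≫ (eqToHom hPa ≫ gel)
            ≫ eqToHom (congrArg (pbProj lamD p).obj
                (Functor.congr_obj hih Zb).symm) := by
        show (pbProj lamD p).map (Ψh.map ψ) = _
        have c0 : Ψh.map (Ψi.map χ)
            = eqToHom (Functor.congr_obj hih (Ψh.obj ea)) ≫ χ
              ≫ eqToHom (Functor.congr_obj hih Zb).symm :=
          Functor.congr_hom hih χ
        have c1 : Ψh.map ψ
            = eqToHom (congrArg Ψh.obj (Functor.congr_obj hhi ea).symm)
              ≫ Ψh.map (Ψi.map χ) := by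
          show Ψh.map (eqToHom (Functor.congr_obj hhi ea).symm ≫ Ψi.map χ) = _
          rw [Ψh.map_comp, eqToHom_map]
        rw [c1, c0]
        simp only [Functor.map_comp, eqToHom_map]
        rfl
      have hψu : ψ.1 = g ≫ eqToHom q' := by
        have hval := congrArg Subtype.val (hψ1.trans (by rw [hψ2]))
        simp only [el_eqToHom_val] at hval
        have : ψ.1 = ((elMap G).map ψ).1 := rfl
        rw [this, hval]
        simp only [eqToHom_trans, Category.assoc, eqToHom_trans_assoc]
        simp only [el_comp_val, el_eqToHom_val]
        erw [el_eqToHom_val hPa, el_eqToHom_val]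
        simp only [eqToHom_trans, eqToHom_trans_assoc, eqToHom_refl, Category.id_comp]
        erw [eqToHom_trans_assoc]
        rfl
      refine ⟨Y.map (eqToHom q').op eb.σ, ?_, ?_⟩
      · have hp2 : Y.map ψ.1.op eb.σ = y := ψ.2
        rw [hψu, op_comp, FunctorToTypes.map_comp_apply] at hp2
        exact hp2
      · have hn := ConcreteCategory.congr_hom (G.naturality (eqToHom q').op) eb.σ
        exact hn.trans (el_map_eqToHom hEb q')
  exact ⟨hculf, isDecomp_of_isCULF hculf hD⟩

theorem statement17 {D : SSet.{0}} (hD : IsDecomp D)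
    (Λ : ∀ X : SSet.{0}, nerve (El X) ⟶ sdF.obj X) (hΛ : IsLambda Λ)
    (TD : Type) [SmallCategory TD] (eD : nerve TD ≅ sdF.obj D)
    (lamD : El D ⥤ TD)
    (hlam : nerveFunctor.map (X := Cat.of (El D)) (Y := Cat.of TD) lamD.toCatHom ≫ eD.hom = Λ D)
    (F : Type) [SmallCategory F] (p : F ⥤ TD) (hp : IsDiscreteFibration p)
    (Y : SSet.{0}) (G : Y ⟶ D)
    (Ψ : Cat.of (El Y) ≅ Cat.of (StrictPB lamD p))
    (hΨ : Ψ.hom.toFunctor ⋙ pbProj lamD p = elMap G) :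
    IsCULF G ∧ IsDecomp Y := by
  exact statement17_aux hD Λ hΛ TD eD lamD hlam F p hp Y G Ψ.hom.toFunctor Ψ.inv.toFunctor
    (by have := congrArg Cat.Hom.toFunctor Ψ.hom_inv_id; exact this)
    (by have := congrArg Cat.Hom.toFunctor Ψ.inv_hom_id; exact this) hΨ

end DecompPaper
end
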